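/- arXiv:1108.3588 — 5 statements merged into one kernel-verified Lean document; each statement's English description precedes it below -/
import Mathlib

section
/- If Γ_D is bipartite and for every prime pair (i,j) of D the total number of directed paths from i to j, namely ∑_{m≥1} ((B−I)^m)_{i,j}, is at most 2, then B is signable. -/
open Matrix

/-- A square integer matrix `M` is *signable* if there is a signing vector `s`
(valued in `{+1, -1}`) with `s i * M i j * s j = |M i j|` for all `i, j`. -/
def IsSignable {k : ℕ} (M : Matrix (Fin k) (Fin k) ℤ) : Prop :=
  ∃ s : Fin k → ℤ, (∀ i, s i = 1 ∨ s i = -1) ∧ ∀ i j, s i * M i j * s j = |M i j|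

/-- `{i, j}` is an edge of the maximal-path subgraph `Γ_D` of the digraph `D` with
adjacency matrix `B - 1`: there is an edge from `i` to `j` and no directed path
of length `≥ 2` from `i` to `j`. -/
def GammaEdge {k : ℕ} (B : Matrix (Fin k) (Fin k) ℤ) (i j : Fin k) : Prop :=
  i < j ∧ 1 ≤ B i j ∧ ∀ m : ℕ, 2 ≤ m → ((B - 1) ^ m) i j = 0

/-- The maximal-path subgraph `Γ_D` is bipartite. -/
def GammaBipartite {k : ℕ} (B : Matrix (Fin k) (Fin k) ℤ) : Prop :=
  ∃ c : Fin k → Bool, ∀ i j : Fin k, GammaEdge B i j → c i ≠ c j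

open Classical in
/-- The pairing `⟨i,j⟩`: it is `1` on the diagonal, `(-1)^ℓ(i,j)` where `ℓ(i,j)` is the
length of a longest directed path from `i` to `j` when such a path exists, and `0`
otherwise. -/
noncomputable def pairing {k : ℕ} (B : Matrix (Fin k) (Fin k) ℤ) (i j : Fin k) : ℤ :=
  if i = j then 1
  else if ∃ m : ℕ, 1 ≤ m ∧ ((B - 1) ^ m) i j ≠ 0 then
    (-1 : ℤ) ^ sSup {m : ℕ | 1 ≤ m ∧ ((B - 1) ^ m) i j ≠ 0}
  else 0

/-- `B⁽ᵛ⁾`: the matrix obtained from `B` by replacing every off-diagonal entry in row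
`v` and in column `v` by `0` (deleting the vertex `v` from the digraph). -/
def vertexDelete {k : ℕ} (B : Matrix (Fin k) (Fin k) ℤ) (v : Fin k) :
    Matrix (Fin k) (Fin k) ℤ :=
  Matrix.of fun i j => if i ≠ j ∧ (i = v ∨ j = v) then 0 else B i j

/-- `(i,j)` is a zero pair: no directed path from `i` to `j`. -/
def ZeroPair {k : ℕ} (B : Matrix (Fin k) (Fin k) ℤ) (i j : Fin k) : Prop :=
  ∀ m : ℕ, 1 ≤ m → ((B - 1) ^ m) i j = 0

/-- `(i,j)` is a unit pair: all directed paths from `i` to `j` have length one. -/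
def UnitPair {k : ℕ} (B : Matrix (Fin k) (Fin k) ℤ) (i j : Fin k) : Prop :=
  1 ≤ B i j ∧ ∀ m : ℕ, 2 ≤ m → ((B - 1) ^ m) i j = 0

/-- `(i,j)` is a composite pair: every directed path from `i` to `j` passes through
some fixed intermediate vertex `v`. -/
def CompositePair {k : ℕ} (B : Matrix (Fin k) (Fin k) ℤ) (i j : Fin k) : Prop :=
  ∃ v : Fin k, i < v ∧ v < j ∧ ∀ m : ℕ, 1 ≤ m → ((vertexDelete B v - 1) ^ m) i j = 0

/-- `(i,j)` is a prime pair: `i < j` and `(i,j)` is neither a zero pair, a unit pair,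
nor a composite pair. -/
def PrimePair {k : ℕ} (B : Matrix (Fin k) (Fin k) ℤ) (i j : Fin k) : Prop :=
  i < j ∧ ¬ZeroPair B i j ∧ ¬UnitPair B i j ∧ ¬CompositePair B i j



namespace Stmt13Aux

variable {n : ℕ}

/-- A chain of length `L` w.r.t. a relation `R`. -/
def RCh (R : Fin n → Fin n → Prop) (v : ℕ → Fin n) (L : ℕ) : Prop :=
  ∀ t, t < L → R (v t) (v (t + 1))

section Basic

variable (N : Matrix (Fin n) (Fin n) ℤ)

lemma pow_entry_nonneg (hN0 : ∀ x y, 0 ≤ N x y) :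
    ∀ (m : ℕ) (x y : Fin n), 0 ≤ (N ^ m) x y := by
  intro m
  induction m with
  | zero => intro x y; by_cases h : x = y <;> simp [Matrix.one_apply, h]
  | succ m ih =>
    intro x y
    rw [pow_succ, Matrix.mul_apply]
    exact Finset.sum_nonneg fun k _ => mul_nonneg (ih x k) (hN0 k y)

lemma entry_mul_le (X Y : Matrix (Fin n) (Fin n) ℤ)
    (hX : ∀ x y, 0 ≤ X x y) (hY : ∀ x y, 0 ≤ Y x y) (x y z : Fin n) :
    X x y * Y y z ≤ (X * Y) x z := by
  rw [Matrix.mul_apply]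
  exact Finset.single_le_sum (f := fun k => X x k * Y k z)
    (fun k _ => mul_nonneg (hX x k) (hY k z)) (Finset.mem_univ y)

lemma chain_eval (hN0 : ∀ x y, 0 ≤ N x y) {v : ℕ → Fin n} :
    ∀ {L : ℕ}, RCh (fun x y => 1 ≤ N x y) v L → 1 ≤ (N ^ L) (v 0) (v L) := by
  intro L
  induction L with
  | zero => intro _; simp [Matrix.one_apply]
  | succ L ih =>
    intro h
    have h1 : 1 ≤ (N ^ L) (v 0) (v L) := ih fun t ht => h t (by omega)
    have h2 : 1 ≤ N (v L) (v (L + 1)) := h L (by omega)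
    calc (1 : ℤ) = 1 * 1 := by ring
    _ ≤ (N ^ L) (v 0) (v L) * N (v L) (v (L + 1)) := by
        exact mul_le_mul h1 h2 (by norm_num) (by linarith)
    _ ≤ (N ^ (L + 1)) (v 0) (v (L + 1)) := by
        rw [pow_succ]
        exact entry_mul_le _ _ (pow_entry_nonneg N hN0 L) hN0 _ _ _

lemma chain_extract :
    ∀ {L : ℕ} {x y : Fin n}, (N ^ L) x y ≠ 0 →
      ∃ v : ℕ → Fin n, v 0 = x ∧ v L = y ∧ RCh (fun a b => N a b ≠ 0) v L := by
  intro L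
  induction L with
  | zero =>
    intro x y h
    have : x = y := by
      by_contra hne
      simp [Matrix.one_apply, hne] at h
    exact ⟨fun _ => x, rfl, by simp [this], fun t ht => by omega⟩
  | succ L ih =>
    intro x y h
    rw [pow_succ', Matrix.mul_apply] at h
    obtain ⟨k, _, hk⟩ := Finset.exists_ne_zero_of_sum_ne_zero h
    have h1 : N x k ≠ 0 := fun h0 => hk (by rw [h0, zero_mul])
    have h2 : (N ^ L) k y ≠ 0 := fun h0 => hk (by rw [h0, mul_zero])
    obtain ⟨w, hw0, hwL, hwc⟩ := ih h2
    refine ⟨fun t => if t = 0 then x else w (t - 1), by simp, by simp [hwL], ?_⟩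
    intro t ht
    rcases Nat.eq_zero_or_pos t with rfl | htpos
    · simpa [hw0] using h1
    · have h3 := hwc (t - 1) (by omega)
      have e1 : ¬ (t = 0) := by omega
      have e2 : ¬ (t + 1 = 0) := by omega
      simpa [e1, e2, show t + 1 - 1 = t - 1 + 1 by omega] using h3

end Basic

lemma RCh.sub  {R : Fin n → Fin n → Prop} {v : ℕ → Fin n} {L : ℕ}
    (h : RCh R v L) (a d : ℕ) (hd : a + d ≤ L) :
    RCh R (fun t => v (a + t)) d := by
  intro t ht
  simpa [show a + (t + 1) = a + t + 1 by omega] using h (a + t) (by omega)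

/-- Concatenation of chains. -/
lemma RCh.concat {R : Fin n → Fin n → Prop} {v w : ℕ → Fin n} {L1 L2 : ℕ}
    (h1 : RCh R v L1) (h2 : RCh R w L2) (hjoin : v L1 = w 0) :
    ∃ u : ℕ → Fin n, u 0 = v 0 ∧ u (L1 + L2) = w L2 ∧ RCh R u (L1 + L2) ∧
      (L2 = 0 → u (L1 + L2) = v L1) := by
  refine ⟨fun t => if t < L1 then v t else w (t - L1), ?_, ?_, ?_, ?_⟩
  · rcases Nat.eq_zero_or_pos L1 with h | h
    · simp [h, ← hjoin]
    · simp [h]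
  · simp [show ¬ (L1 + L2 < L1) by omega, show L1 + L2 - L1 = L2 by omega]
  · intro t ht
    by_cases htl : t + 1 < L1
    · simpa [show t < L1 by omega, htl] using h1 t (by omega)
    · by_cases htl2 : t < L1
      · have : t + 1 = L1 := by omega
        simpa [htl2, htl, this, hjoin] using h1 t (by omega)
      · simpa [htl2, htl, show t + 1 - L1 = t - L1 + 1 by omega]
          using h2 (t - L1) (by omega)
  · intro h
    simp [show ¬ (L1 + L2 < L1) ∨ L1 + L2 < L1 by omega, h, ← hjoin,
      show L1 + L2 - L1 = L2 by omega]

section Tri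

variable (N : Matrix (Fin n) (Fin n) ℤ)

lemma chain_incr (hNlt : ∀ x y : Fin n, N x y ≠ 0 → x < y) {v : ℕ → Fin n} :
    ∀ {L : ℕ}, RCh (fun a b => N a b ≠ 0) v L → (v 0 : ℕ) + L ≤ (v L : ℕ) := by
  intro L
  induction L with
  | zero => simp
  | succ L ih =>
    intro h
    have h1 := ih (fun t ht => h t (by omega))
    have h2 : (v L) < v (L + 1) := hNlt _ _ (h L (by omega))
    have := Fin.lt_iff_val_lt_val.mp h2
    omega

lemma pow_vanish (hNlt : ∀ x y : Fin n, N x y ≠ 0 → x < y) {m : ℕ} (hm : n ≤ m) :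
    N ^ m = 0 := by
  ext x y
  by_contra h
  have h' : (N ^ m) x y ≠ 0 := by simpa using h
  obtain ⟨v, hv0, hvL, hvc⟩ := chain_extract N h'
  have := chain_incr N hNlt hvc
  have : (v m : ℕ) < n := (v m).isLt
  omega



lemma pow_entry_zero (hNlt : ∀ x y : Fin n, N x y ≠ 0 → x < y) {m : ℕ} {x y : Fin n}
    (h : (y : ℕ) < (x : ℕ) + m) : (N ^ m) x y = 0 := by
  by_contra hc
  obtain ⟨v, hv0, hvL, hvc⟩ := chain_extract N hc
  have := chain_incr N hNlt hvc
  rw [hv0, hvL] at this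
  omega

lemma geom_inv (hNlt : ∀ x y : Fin n, N x y ≠ 0 → x < y) (hn : 1 ≤ n) :
    (N + 1)⁻¹ = ∑ m ∈ Finset.range n, (-1 : ℤ) ^ m • N ^ m := by
  have key := geom_sum_mul (-N) n
  have hNn : (-N) ^ n = 0 := by
    rw [show -N = (-1 : ℤ) • N by simp, smul_pow, pow_vanish N hNlt (le_refl n), smul_zero]
  rw [hNn] at key
  have key2 : (∑ m ∈ Finset.range n, (-N) ^ m) * (N + 1) = 1 := by
    have h' : (∑ m ∈ Finset.range n, (-N) ^ m) * (-(N + 1)) = -1 := by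
      rw [show -(N+1) = (-N) - 1 by abel, key]; abel
    rw [mul_neg] at h'
    have := congrArg Neg.neg h'
    simpa using this
  have := Matrix.inv_eq_left_inv key2
  rw [this]
  congr 1
  ext m : 1
  rw [show -N = (-1 : ℤ) • N by simp, smul_pow]

lemma inv_entry (hNlt : ∀ x y : Fin n, N x y ≠ 0 → x < y) (hn : 1 ≤ n)
    (K : ℕ) (hK : n ≤ K) {x y : Fin n} (hxy : x ≠ y) :
    (N + 1)⁻¹ x y = ∑ m ∈ Finset.Icc 1 K, (-1 : ℤ) ^ m * (N ^ m) x y := by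
  rw [geom_inv N hNlt hn]
  rw [Matrix.sum_apply]
  have hfull : ∀ S : Finset ℕ, S ⊆ Finset.range (K + 1) →
      (∀ m ∈ Finset.range (K + 1), m ∉ S → (-1 : ℤ) ^ m * (N ^ m) x y = 0) →
      (∑ m ∈ S, (-1 : ℤ) ^ m * (N ^ m) x y)
        = ∑ m ∈ Finset.range (K + 1), (-1 : ℤ) ^ m * (N ^ m) x y := by
    intro S hS h0
    exact Finset.sum_subset hS h0
  have e1 : (∑ m ∈ Finset.range n, ((-1 : ℤ) ^ m • N ^ m) x y)
      = ∑ m ∈ Finset.range n, (-1 : ℤ) ^ m * (N ^ m) x y := by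
    apply Finset.sum_congr rfl; intro m _; simp [Matrix.smul_apply]
  rw [e1, hfull (Finset.range n) (by intro m hm; simp at *; omega) ?_,
    ← hfull (Finset.Icc 1 K) (by intro m hm; simp at *; omega) ?_]
  · intro m hm hm2
    simp only [Finset.mem_range, Finset.mem_Icc] at hm hm2
    have : m = 0 := by omega
    subst this
    simp [Matrix.one_apply, hxy]
  · intro m hm hm2
    simp only [Finset.mem_range] at hm hm2
    rw [pow_vanish N hNlt (show n ≤ m by omega)]
    simp

lemma inv_diag (hNlt : ∀ x y : Fin n, N x y ≠ 0 → x < y) (hn : 1 ≤ n) (x : Fin n) :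
    (N + 1)⁻¹ x x = 1 := by
  rw [geom_inv N hNlt hn, Matrix.sum_apply]
  rw [Finset.sum_eq_single 0]
  · simp [Matrix.one_apply]
  · intro m _ hm
    rw [Matrix.smul_apply, pow_entry_zero N hNlt (by omega : (x:ℕ) < (x:ℕ) + m), smul_zero]
  · intro h; simp at h; omega


end Tri


section Splice

variable (N : Matrix (Fin n) (Fin n) ℤ)

lemma one_le_pow_mul (hN0 : ∀ x y, 0 ≤ N x y) {a b : ℕ} {x y z : Fin n}
    (ha : 1 ≤ (N ^ a) x y) (hb : 1 ≤ (N ^ b) y z) : 1 ≤ (N ^ (a + b)) x z := by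
  calc (1 : ℤ) = 1 * 1 := by ring
  _ ≤ (N ^ a) x y * (N ^ b) y z := mul_le_mul ha hb (by norm_num) (by linarith)
  _ ≤ (N ^ (a + b)) x z := by
      rw [pow_add]
      exact entry_mul_le _ _ (pow_entry_nonneg N hN0 a) (pow_entry_nonneg N hN0 b) _ _ _

lemma chain_segment (hN0 : ∀ x y, 0 ≤ N x y) {v : ℕ → Fin n} {m : ℕ}
    (hv : RCh (fun x y => 1 ≤ N x y) v m) {a b : ℕ} (hab : a ≤ b) (hbm : b ≤ m) :
    1 ≤ (N ^ (b - a)) (v a) (v b) := by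
  have hsub := hv.sub a (b - a) (by omega)
  have := chain_eval N hN0 hsub
  simpa [show a + (b - a) = b by omega] using this

lemma splice1 (hN0 : ∀ x y, 0 ≤ N x y) {v : ℕ → Fin n} {m : ℕ}
    (hv : RCh (fun x y => 1 ≤ N x y) v m) {t r : ℕ} (ht : t < m)
    (hr : 1 ≤ (N ^ r) (v t) (v (t + 1))) :
    1 ≤ (N ^ (m - 1 + r)) (v 0) (v m) := by
  have h1 : 1 ≤ (N ^ (t - 0)) (v 0) (v t) := chain_segment N hN0 hv (by omega) (by omega)
  have h2 : 1 ≤ (N ^ (m - (t + 1))) (v (t + 1)) (v m) :=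
    chain_segment N hN0 hv (by omega) (by omega)
  have := one_le_pow_mul N hN0 (one_le_pow_mul N hN0 h1 hr) h2
  have he : t - 0 + r + (m - (t + 1)) = m - 1 + r := by omega
  rwa [he] at this

lemma splice2 (hN0 : ∀ x y, 0 ≤ N x y) {v : ℕ → Fin n} {m : ℕ}
    (hv : RCh (fun x y => 1 ≤ N x y) v m) {t t' r r' : ℕ} (htt : t < t') (ht' : t' < m)
    (hr : 1 ≤ (N ^ r) (v t) (v (t + 1))) (hr' : 1 ≤ (N ^ r') (v t') (v (t' + 1))) :
    1 ≤ (N ^ (m - 2 + r + r')) (v 0) (v m) := by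
  have h1 : 1 ≤ (N ^ (t - 0)) (v 0) (v t) := chain_segment N hN0 hv (by omega) (by omega)
  have h2 : 1 ≤ (N ^ (t' - (t + 1))) (v (t + 1)) (v t') :=
    chain_segment N hN0 hv (by omega) (by omega)
  have h3 : 1 ≤ (N ^ (m - (t' + 1))) (v (t' + 1)) (v m) :=
    chain_segment N hN0 hv (by omega) (by omega)
  have := one_le_pow_mul N hN0
    (one_le_pow_mul N hN0 (one_le_pow_mul N hN0 (one_le_pow_mul N hN0 h1 hr) h2) hr') h3
  have he : t - 0 + r + (t' - (t + 1)) + r' + (m - (t' + 1)) = m - 2 + r + r' := by omega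
  rwa [he] at this

lemma one_le_of_ne (hN0 : ∀ x y, 0 ≤ N x y) {m : ℕ} {x y : Fin n}
    (h : (N ^ m) x y ≠ 0) : 1 ≤ (N ^ m) x y := by
  have := pow_entry_nonneg N hN0 m x y
  omega

lemma chain_extract' (hN0 : ∀ x y, 0 ≤ N x y) {L : ℕ} {x y : Fin n}
    (h : 1 ≤ (N ^ L) x y) :
    ∃ v : ℕ → Fin n, v 0 = x ∧ v L = y ∧ RCh (fun a b => 1 ≤ N a b) v L := by
  obtain ⟨v, h0, hL, hc⟩ := chain_extract N (by omega : (N ^ L) x y ≠ 0)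
  exact ⟨v, h0, hL, fun t ht => by
    have := hc t ht
    have := hN0 (v t) (v (t + 1))
    omega⟩

end Splice

section Prime

variable (N : Matrix (Fin n) (Fin n) ℤ)

lemma primeChain (hN0 : ∀ x y, 0 ≤ N x y) (hNlt : ∀ x y : Fin n, N x y ≠ 0 → x < y)
    {i j : Fin n}
    (hsum : (∑ m ∈ Finset.Icc 1 n, (N ^ m) i j) ≤ 2)
    (hA : (∑ m ∈ Finset.Icc 1 n, (-1 : ℤ) ^ m * (N ^ m) i j) ≠ 0) :
    ∃ (L : ℕ) (v : ℕ → Fin n), v 0 = i ∧ v L = j ∧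
      RCh (fun x y => 1 ≤ N x y ∧ ∀ r, 2 ≤ r → (N ^ r) x y = 0) v L ∧
      (∑ m ∈ Finset.Icc 1 n, (-1 : ℤ) ^ m * (N ^ m) i j)
        = (-1) ^ L * |∑ m ∈ Finset.Icc 1 n, (-1 : ℤ) ^ m * (N ^ m) i j| := by
  classical
  set A := ∑ m ∈ Finset.Icc 1 n, (-1 : ℤ) ^ m * (N ^ m) i j with hAdef
  set p : ℕ → ℤ := fun m => (N ^ m) i j with hp
  set T : Finset ℕ := (Finset.Icc 1 n).filter (fun m => p m ≠ 0) with hT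
  have hp0 : ∀ m, 0 ≤ p m := fun m => pow_entry_nonneg N hN0 m i j
  have hmemT : ∀ e, 1 ≤ e → 1 ≤ (N ^ e) i j → e ∈ T := by
    intro e he1 he
    have hen : e ≤ n := by
      by_contra hc
      rw [pow_vanish N hNlt (by omega)] at he
      simp at he
    exact Finset.mem_filter.mpr ⟨Finset.mem_Icc.mpr ⟨he1, hen⟩, by
      show p e ≠ 0
      have : 1 ≤ p e := he
      omega⟩
  have hTne : T.Nonempty := by
    rcases Finset.eq_empty_or_nonempty T with h | h
    · exfalso; apply hA; apply Finset.sum_eq_zero; intro m hm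
      have hz : p m = 0 := by
        by_contra hc
        have : m ∈ T := Finset.mem_filter.mpr ⟨hm, hc⟩
        simp [h] at this
      rw [show (N ^ m) i j = 0 from hz, mul_zero]
    · exact h
  set m0 := T.min' hTne with hm0def
  have hm0T : m0 ∈ T := T.min'_mem hTne
  have hm0min : ∀ m ∈ T, m0 ≤ m := fun m hm => T.min'_le m hm
  obtain ⟨hm0Icc, hpm0⟩ := Finset.mem_filter.mp hm0T
  have hm0_1 : 1 ≤ m0 := (Finset.mem_Icc.mp hm0Icc).1
  have hm0_n : m0 ≤ n := (Finset.mem_Icc.mp hm0Icc).2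
  have hpm0' : 1 ≤ p m0 := by have := hp0 m0; omega
  obtain ⟨v, hv0, hvm, hvc⟩ := chain_extract' N hN0 (show 1 ≤ (N ^ m0) i j from hpm0')
  by_cases hsingle : ∀ m ∈ T, m = m0
  · have hAval : A = (-1) ^ m0 * p m0 := by
      rw [hAdef]
      apply Finset.sum_eq_single_of_mem m0 hm0Icc
      intro m hm hne
      by_cases hpm : p m = 0
      · rw [show (N ^ m) i j = 0 from hpm, mul_zero]
      · exact absurd (hsingle m (Finset.mem_filter.mpr ⟨hm, hpm⟩)) hne
    have hGam : ∀ t, t < m0 → ∀ r, 2 ≤ r → (N ^ r) (v t) (v (t + 1)) = 0 := by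
      intro t ht r hr
      by_contra hc
      have h1 := one_le_of_ne N hN0 hc
      have h2 := splice1 N hN0 hvc ht h1
      rw [hv0, hvm] at h2
      have hmem := hmemT (m0 - 1 + r) (by omega) h2
      have := hsingle _ hmem
      omega
    refine ⟨m0, v, hv0, hvm, fun t ht => ⟨hvc t ht, hGam t ht⟩, ?_⟩
    rw [hAval, abs_mul, abs_pow, abs_neg, abs_one, one_pow, one_mul,
      abs_of_nonneg (hp0 m0)]
  · push_neg at hsingle
    obtain ⟨m1, hm1T, hm1ne⟩ := hsingle
    have hm1gt : m0 < m1 := lt_of_le_of_ne (hm0min _ hm1T) (Ne.symm hm1ne)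
    obtain ⟨hm1Icc, hpm1⟩ := Finset.mem_filter.mp hm1T
    have hpm1' : 1 ≤ p m1 := by have := hp0 m1; omega
    have hpairsub : ({m0, m1} : Finset ℕ) ⊆ Finset.Icc 1 n := by
      intro m hm
      simp only [Finset.mem_insert, Finset.mem_singleton] at hm
      rcases hm with rfl | rfl <;> assumption
    have hpair : p m0 + p m1 ≤ 2 := by
      have hle : ∑ m ∈ ({m0, m1} : Finset ℕ), p m ≤ ∑ m ∈ Finset.Icc 1 n, p m :=
        Finset.sum_le_sum_of_subset_of_nonneg hpairsub (fun m _ _ => hp0 m)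
      rw [Finset.sum_pair (by omega : m0 ≠ m1)] at hle
      exact le_trans hle hsum
    have hpm0e : p m0 = 1 := by omega
    have hpm1e : p m1 = 1 := by omega
    have honly : ∀ m ∈ T, m = m0 ∨ m = m1 := by
      intro m hmT
      by_contra hc
      push_neg at hc
      obtain ⟨hc0, hc1⟩ := hc
      obtain ⟨hmIcc, hpmne⟩ := Finset.mem_filter.mp hmT
      have hpm : 1 ≤ p m := by have := hp0 m; omega
      have hsub3 : ({m0, m1, m} : Finset ℕ) ⊆ Finset.Icc 1 n := by
        intro x hx
        simp only [Finset.mem_insert, Finset.mem_singleton] at hx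
        rcases hx with rfl | rfl | rfl <;> assumption
      have hle : ∑ x ∈ ({m0, m1, m} : Finset ℕ), p x ≤ ∑ x ∈ Finset.Icc 1 n, p x :=
        Finset.sum_le_sum_of_subset_of_nonneg hsub3 (fun x _ _ => hp0 x)
      rw [Finset.sum_insert (by
          simp only [Finset.mem_insert, Finset.mem_singleton]
          push_neg
          exact ⟨by omega, fun h => hc0 h.symm⟩),
        Finset.sum_pair (fun h => hc1 h.symm)] at hle
      have := le_trans hle hsum
      omega
    have hAval : A = (-1) ^ m0 + (-1) ^ m1 := by
      rw [hAdef, ← Finset.sum_subset hpairsub (by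
        intro x hx hxn
        by_cases hpx : p x = 0
        · rw [show (N ^ x) i j = 0 from hpx, mul_zero]
        · exfalso
          rcases honly x (Finset.mem_filter.mpr ⟨hx, hpx⟩) with rfl | rfl <;>
            simp at hxn)]
      rw [Finset.sum_pair (by omega : m0 ≠ m1), show (N ^ m0) i j = 1 from hpm0e,
        show (N ^ m1) i j = 1 from hpm1e, mul_one, mul_one]
    have hparity : (-1 : ℤ) ^ m1 = (-1) ^ m0 := by
      rcases Nat.even_or_odd m0 with h0 | h0 <;> rcases Nat.even_or_odd m1 with h1 | h1
      · rw [h0.neg_one_pow, h1.neg_one_pow]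
      · exfalso; apply hA; rw [hAval, h0.neg_one_pow, h1.neg_one_pow]; ring
      · exfalso; apply hA; rw [hAval, h0.neg_one_pow, h1.neg_one_pow]; ring
      · rw [h0.neg_one_pow, h1.neg_one_pow]
    have key : ∀ L : ℕ, (-1 : ℤ) ^ L = (-1) ^ m0 → A = (-1) ^ L * |A| := by
      intro L hL
      rcases Nat.even_or_odd m0 with h | h
      · rw [hAval, hparity, hL, h.neg_one_pow]; norm_num
      · rw [hAval, hparity, hL, h.neg_one_pow]; norm_num
    by_cases hall : ∀ t, t < m0 → ∀ r, 2 ≤ r → (N ^ r) (v t) (v (t + 1)) = 0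
    · exact ⟨m0, v, hv0, hvm, fun t ht => ⟨hvc t ht, hall t ht⟩, key m0 rfl⟩
    · push_neg at hall
      obtain ⟨t, ht, r, hr2, hrne⟩ := hall
      have hr1 := one_le_of_ne N hN0 hrne
      have hs1 := splice1 N hN0 hvc ht hr1
      rw [hv0, hvm] at hs1
      have hmem1 := hmemT (m0 - 1 + r) (by omega) hs1
      have hre : m0 - 1 + r = m1 := by
        rcases honly _ hmem1 with h | h
        · omega
        · exact h
      have haltuniq : ∀ t', t' < m0 → t' ≠ t → ∀ r', 2 ≤ r' →
          (N ^ r') (v t') (v (t' + 1)) = 0 := by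
        intro t' ht' htne r' hr2'
        by_contra hc
        have hr1' := one_le_of_ne N hN0 hc
        have hs1' := splice1 N hN0 hvc ht' hr1'
        rw [hv0, hvm] at hs1'
        have hmem' := hmemT (m0 - 1 + r') (by omega) hs1'
        have hre' : r' = r := by
          rcases honly _ hmem' with h | h <;> omega
        rcases Nat.lt_or_ge t' t with hlt | hge
        · have hd := splice2 N hN0 hvc hlt ht hr1' hr1
          rw [hv0, hvm] at hd
          have := hmemT (m0 - 2 + r' + r) (by omega) hd
          rcases honly _ this with h | h <;> omega
        · have hlt : t < t' := by omega
          have hd := splice2 N hN0 hvc hlt ht' hr1 hr1'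
          rw [hv0, hvm] at hd
          have := hmemT (m0 - 2 + r + r') (by omega) hd
          rcases honly _ this with h | h <;> omega
      obtain ⟨w, hw0, hwr, hwc⟩ := chain_extract' N hN0 hr1
      have hwGam : ∀ s, s < r → ∀ r'', 2 ≤ r'' → (N ^ r'') (w s) (w (s + 1)) = 0 := by
        intro s hs r'' hr''
        by_contra hc
        have h1 := one_le_of_ne N hN0 hc
        have h2 := splice1 N hN0 hwc hs h1
        rw [hw0, hwr] at h2
        have h3 := splice1 N hN0 hvc ht h2
        rw [hv0, hvm] at h3
        have := hmemT (m0 - 1 + (r - 1 + r'')) (by omega) h3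
        rcases honly _ this with h | h <;> omega
      have hpre : RCh (fun x y => 1 ≤ N x y ∧ ∀ r'', 2 ≤ r'' → (N ^ r'') x y = 0) v t :=
        fun s hs => ⟨hvc s (by omega), haltuniq s (by omega) (by omega)⟩
      have hmid : RCh (fun x y => 1 ≤ N x y ∧ ∀ r'', 2 ≤ r'' → (N ^ r'') x y = 0) w r :=
        fun s hs => ⟨hwc s hs, hwGam s hs⟩
      have hsuf : RCh (fun x y => 1 ≤ N x y ∧ ∀ r'', 2 ≤ r'' → (N ^ r'') x y = 0)
          (fun s => v (t + 1 + s)) (m0 - (t + 1)) := by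
        intro s hs
        have h1 := hvc (t + 1 + s) (by omega)
        have h2 := haltuniq (t + 1 + s) (by omega) (by omega)
        have he : t + 1 + (s + 1) = (t + 1 + s) + 1 := by omega
        refine ⟨?_, ?_⟩
        · show 1 ≤ N (v (t + 1 + s)) (v (t + 1 + (s + 1)))
          rw [he]; exact h1
        · show ∀ r'', 2 ≤ r'' → (N ^ r'') (v (t + 1 + s)) (v (t + 1 + (s + 1))) = 0
          rw [he]; exact h2
      obtain ⟨u1, hu10, hu1e, hu1c, _⟩ := RCh.concat hpre hmid (by rw [hw0])
      obtain ⟨u2, hu20, hu2e, hu2c, _⟩ := RCh.concat hu1c hsuf (by rw [hu1e, hwr])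
      refine ⟨t + r + (m0 - (t + 1)), u2, ?_, ?_, hu2c, key _ ?_⟩
      · rw [hu20, hu10, hv0]
      · rw [hu2e]
        show v (t + 1 + (m0 - (t + 1))) = j
        rw [show t + 1 + (m0 - (t + 1)) = m0 by omega, hvm]
      · rw [show t + r + (m0 - (t + 1)) = m1 by omega, hparity]

end Prime




section Star

variable (N N' : Matrix (Fin n) (Fin n) ℤ) (v : Fin n)

local notation "E" => Matrix.single v v (1 : ℤ)

lemma E_mul_apply (X : Matrix (Fin n) (Fin n) ℤ) (a b : Fin n) :
    (E * X) a b = if a = v then X v b else 0 := by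
  rcases eq_or_ne a v with rfl | h <;> simp [*]

lemma mul_E_apply (X : Matrix (Fin n) (Fin n) ℤ) (a b : Fin n) :
    (X * E) a b = if b = v then X a v else 0 := by
  rcases eq_or_ne b v with rfl | h <;> simp [*]

lemma mul_E_mul_apply (P Q : Matrix (Fin n) (Fin n) ℤ) (a b : Fin n) :
    (P * E * Q) a b = P a v * Q v b := by
  rw [Matrix.mul_assoc, Matrix.mul_apply, Finset.sum_eq_single v]
  · rw [E_mul_apply]; simp
  · intro k _ hk
    rw [E_mul_apply]; simp [hk]
  · simp

end Star



section Star2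
variable (N N' : Matrix (Fin n) (Fin n) ℤ) (v : Fin n)
local notation "E" => Matrix.single v v (1 : ℤ)

lemma star
    (hNdec : N = N' + E * N + N * E)
    (hN'E : N' * E = 0) (hEN' : E * N' = 0) (hENE : E * N * E = 0)
    (hbeta : ∀ k : ℕ, E * (N * N' ^ k * N) * E = 0) (m : ℕ) :
    N ^ (m + 1) = N' ^ (m + 1) + E * N * N' ^ m + N' ^ m * N * E
      + ∑ p ∈ Finset.range m, N' ^ p * (N * E * N) * N' ^ (m - 1 - p) := by
  have hEp : ∀ k : ℕ, E * N' ^ (k + 1) = 0 := by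
    intro k
    rw [pow_succ', ← mul_assoc, hEN', zero_mul]
  have hpE : ∀ k : ℕ, N' ^ (k + 1) * E = 0 := by
    intro k
    rw [pow_succ, mul_assoc, hN'E, mul_zero]
  have hbeta' : ∀ k : ℕ, E * N * N' ^ k * N * E = 0 := by
    intro k
    have := hbeta k
    simp only [← mul_assoc] at this
    exact this
  have hq1 : ∀ k : ℕ, N * E * N' ^ k * N * E = 0 := by
    intro k
    cases k with
    | zero =>
      rw [pow_zero, mul_one]
      calc N * E * N * E = N * (E * N * E) := by simp only [mul_assoc]
      _ = 0 := by rw [hENE, mul_zero]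
    | succ k =>
      rw [mul_assoc N E, hEp k, mul_zero, zero_mul, zero_mul]
  have Nmul : ∀ Y : Matrix (Fin n) (Fin n) ℤ,
      N * Y = N' * Y + E * N * Y + N * E * Y := by
    intro Y
    conv_lhs => rw [hNdec, add_mul, add_mul]
  induction m with
  | zero =>
    simp only [zero_add, pow_one, pow_zero, mul_one, one_mul, Finset.range_zero,
      Finset.sum_empty, add_zero]
    exact hNdec
  | succ m ih =>
    have h1 : N * N' ^ (m + 1) = N' ^ (m + 2) + E * N * N' ^ (m + 1) := by
      rw [Nmul (N' ^ (m + 1)), mul_assoc N E, hEp m, mul_zero, add_zero, ← pow_succ']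
    have h2 : N * (E * N * N' ^ m) = (N * E * N) * N' ^ m := by
      simp only [mul_assoc]
    have h3 : N * (N' ^ m * N * E) = N' ^ (m + 1) * N * E := by
      rw [Nmul (N' ^ m * N * E)]
      have t1 : N' * (N' ^ m * N * E) = N' ^ (m + 1) * N * E := by
        simp only [← mul_assoc, ← pow_succ']
      have t2 : E * N * (N' ^ m * N * E) = 0 := by
        simp only [← mul_assoc]
        exact hbeta' m
      have t3 : N * E * (N' ^ m * N * E) = 0 := by
        simp only [← mul_assoc]
        exact hq1 m
      rw [t1, t2, t3, add_zero, add_zero]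
    have h4 : N * (∑ p ∈ Finset.range m, N' ^ p * (N * E * N) * N' ^ (m - 1 - p))
        = ∑ p ∈ Finset.range m, N' ^ (p + 1) * (N * E * N) * N' ^ (m - 1 - p) := by
      rw [Finset.mul_sum]
      refine Finset.sum_congr rfl fun p hp => ?_
      rw [Nmul (N' ^ p * (N * E * N) * N' ^ (m - 1 - p))]
      have t1 : N' * (N' ^ p * (N * E * N) * N' ^ (m - 1 - p))
          = N' ^ (p + 1) * (N * E * N) * N' ^ (m - 1 - p) := by
        simp only [← mul_assoc, ← pow_succ']
      have t2 : E * N * (N' ^ p * (N * E * N) * N' ^ (m - 1 - p)) = 0 := by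
        have hb := hbeta' p
        calc E * N * (N' ^ p * (N * E * N) * N' ^ (m - 1 - p))
            = (E * N * N' ^ p * N * E) * (N * N' ^ (m - 1 - p)) := by
              simp only [mul_assoc]
        _ = 0 := by rw [hb, zero_mul]
      have t3 : N * E * (N' ^ p * (N * E * N) * N' ^ (m - 1 - p)) = 0 := by
        have hb := hq1 p
        calc N * E * (N' ^ p * (N * E * N) * N' ^ (m - 1 - p))
            = (N * E * N' ^ p * N * E) * (N * N' ^ (m - 1 - p)) := by
              simp only [mul_assoc]
        _ = 0 := by rw [hb, zero_mul]
      rw [t1, t2, t3, add_zero, add_zero]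
    have hsum : ∑ p ∈ Finset.range (m + 1), N' ^ p * (N * E * N) * N' ^ (m + 1 - 1 - p)
        = (N * E * N) * N' ^ m
          + ∑ p ∈ Finset.range m, N' ^ (p + 1) * (N * E * N) * N' ^ (m - 1 - p) := by
      rw [Finset.sum_range_succ']
      have e0 : N' ^ 0 * (N * E * N) * N' ^ (m + 1 - 1 - 0) = (N * E * N) * N' ^ m := by
        rw [pow_zero, one_mul]
        congr 1
      have ee : ∀ p, m + 1 - 1 - (p + 1) = m - 1 - p := by intro p; omega
      rw [e0, add_comm]
      congr 1
      refine Finset.sum_congr rfl fun p hp => ?_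
      rw [ee]
    calc N ^ (m + 2) = N * N ^ (m + 1) := by rw [← pow_succ']
    _ = N * (N' ^ (m + 1) + E * N * N' ^ m + N' ^ m * N * E
          + ∑ p ∈ Finset.range m, N' ^ p * (N * E * N) * N' ^ (m - 1 - p)) := by rw [ih]
    _ = N * N' ^ (m + 1) + N * (E * N * N' ^ m) + N * (N' ^ m * N * E)
          + N * (∑ p ∈ Finset.range m, N' ^ p * (N * E * N) * N' ^ (m - 1 - p)) := by
        simp only [mul_add]
    _ = (N' ^ (m + 2) + E * N * N' ^ (m + 1)) + (N * E * N) * N' ^ m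
          + N' ^ (m + 1) * N * E
          + ∑ p ∈ Finset.range m, N' ^ (p + 1) * (N * E * N) * N' ^ (m - 1 - p) := by
        rw [h1, h2, h3, h4]
    _ = N' ^ (m + 2) + E * N * N' ^ (m + 1) + N' ^ (m + 1) * N * E
          + ∑ p ∈ Finset.range (m + 1), N' ^ p * (N * E * N) * N' ^ (m + 1 - 1 - p) := by
        rw [hsum]; abel

end Star2



section Entries
variable (N N' : Matrix (Fin n) (Fin n) ℤ) (v : Fin n)
local notation "E" => Matrix.single v v (1 : ℤ)

lemma e_col (hN'E : N' * E = 0) (k : ℕ) (x : Fin n) : (N' ^ (k + 1)) x v = 0 := by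
  have h0 : N' ^ (k + 1) * E = 0 := by rw [pow_succ, mul_assoc, hN'E, mul_zero]
  have h1 := congrFun (congrFun h0 x) v
  rw [mul_E_apply] at h1
  simpa using h1

lemma e_row (hEN' : E * N' = 0) (k : ℕ) (y : Fin n) : (N' ^ (k + 1)) v y = 0 := by
  have h0 : E * N' ^ (k + 1) = 0 := by rw [pow_succ', ← mul_assoc, hEN', zero_mul]
  have h1 := congrFun (congrFun h0 v) y
  rw [E_mul_apply] at h1
  simpa using h1

variable {i j : Fin n}

lemma e1 (hstar : ∀ m : ℕ, N ^ (m + 1) = N' ^ (m + 1) + E * N * N' ^ m + N' ^ m * N * E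
      + ∑ p ∈ Finset.range m, N' ^ p * (N * E * N) * N' ^ (m - 1 - p))
    (hN'E : N' * E = 0) (hq2 : ∀ q : ℕ, (N * N' ^ q) v v = 0)
    (hiv : i ≠ v) (m : ℕ) :
    (N ^ (m + 1)) i v = (N' ^ m * N) i v := by
  have h := congrFun (congrFun (hstar m) i) v
  simp only [Matrix.add_apply, Matrix.sum_apply] at h
  rw [h, e_col N' v hN'E m i]
  have h2 : (E * N * N' ^ m) i v = 0 := by
    rw [mul_assoc, E_mul_apply, if_neg hiv]
  have h3 : (N' ^ m * N * E) i v = (N' ^ m * N) i v := by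
    rw [mul_E_apply, if_pos rfl]
  have h4 : ∀ p ∈ Finset.range m, (N' ^ p * (N * E * N) * N' ^ (m - 1 - p)) i v = 0 := by
    intro p _
    have hre : N' ^ p * (N * E * N) * N' ^ (m - 1 - p)
        = (N' ^ p * N) * E * (N * N' ^ (m - 1 - p)) := by simp only [mul_assoc]
    rw [hre, mul_E_mul_apply, hq2, mul_zero]
  rw [h2, h3, Finset.sum_eq_zero h4]
  ring

lemma e2 (hstar : ∀ m : ℕ, N ^ (m + 1) = N' ^ (m + 1) + E * N * N' ^ m + N' ^ m * N * E
      + ∑ p ∈ Finset.range m, N' ^ p * (N * E * N) * N' ^ (m - 1 - p))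
    (hEN' : E * N' = 0) (hp2 : ∀ p : ℕ, (N' ^ p * N) v v = 0)
    (hvj : j ≠ v) (m : ℕ) :
    (N ^ (m + 1)) v j = (N * N' ^ m) v j := by
  have h := congrFun (congrFun (hstar m) v) j
  simp only [Matrix.add_apply, Matrix.sum_apply] at h
  rw [h, e_row N' v hEN' m j]
  have h2 : (E * N * N' ^ m) v j = (N * N' ^ m) v j := by
    rw [mul_assoc, E_mul_apply, if_pos rfl]
  have h3 : (N' ^ m * N * E) v j = 0 := by
    rw [mul_E_apply, if_neg hvj]
  have h4 : ∀ p ∈ Finset.range m, (N' ^ p * (N * E * N) * N' ^ (m - 1 - p)) v j = 0 := by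
    intro p _
    have hre : N' ^ p * (N * E * N) * N' ^ (m - 1 - p)
        = (N' ^ p * N) * E * (N * N' ^ (m - 1 - p)) := by simp only [mul_assoc]
    rw [hre, mul_E_mul_apply, hp2, zero_mul]
  rw [h2, h3, Finset.sum_eq_zero h4]
  ring

lemma e3 (hstar : ∀ m : ℕ, N ^ (m + 1) = N' ^ (m + 1) + E * N * N' ^ m + N' ^ m * N * E
      + ∑ p ∈ Finset.range m, N' ^ p * (N * E * N) * N' ^ (m - 1 - p))
    (hN'E : N' * E = 0) (hEN' : E * N' = 0)
    (hq2 : ∀ q : ℕ, (N * N' ^ q) v v = 0) (hp2 : ∀ p : ℕ, (N' ^ p * N) v v = 0)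
    (hiv : i ≠ v) (hvj : j ≠ v)
    (hz : ∀ k : ℕ, 1 ≤ k → (N' ^ k) i j = 0) (m : ℕ) :
    (N ^ (m + 1)) i j = ∑ p ∈ Finset.range m, (N ^ (p + 1)) i v * (N ^ (m - p)) v j := by
  have h := congrFun (congrFun (hstar m) i) j
  simp only [Matrix.add_apply, Matrix.sum_apply] at h
  rw [h, hz (m + 1) (by omega)]
  have h2 : (E * N * N' ^ m) i j = 0 := by
    rw [mul_assoc, E_mul_apply, if_neg hiv]
  have h3 : (N' ^ m * N * E) i j = 0 := by
    rw [mul_E_apply, if_neg hvj]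
  rw [h2, h3]
  have h4 : ∀ p ∈ Finset.range m, (N' ^ p * (N * E * N) * N' ^ (m - 1 - p)) i j
      = (N ^ (p + 1)) i v * (N ^ (m - p)) v j := by
    intro p hp
    simp only [Finset.mem_range] at hp
    have hre : N' ^ p * (N * E * N) * N' ^ (m - 1 - p)
        = (N' ^ p * N) * E * (N * N' ^ (m - 1 - p)) := by simp only [mul_assoc]
    rw [hre, mul_E_mul_apply]
    rw [e1 N N' v hstar hN'E hq2 hiv p]
    have := e2 N N' v hstar hEN' hp2 hvj (m - 1 - p)
    rw [show m - 1 - p + 1 = m - p by omega] at this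
    rw [this]
  rw [Finset.sum_congr rfl h4]
  ring

end Entries




lemma cauchy (M : ℕ) (x y z : ℕ → ℤ)
    (hx : ∀ a, M ≤ a → x a = 0) (hy : ∀ b, M ≤ b → y b = 0) (hy0 : y 0 = 0)
    (hz : ∀ m, M ≤ m → z m = 0)
    (hzd : ∀ m, 1 ≤ m → z m = ∑ p ∈ Finset.range (m - 1), x (p + 1) * y (m - 1 - p)) :
    ∑ m ∈ Finset.Icc 1 M, (-1 : ℤ) ^ m * z m
      = (∑ a ∈ Finset.Icc 1 M, (-1 : ℤ) ^ a * x a)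
        * (∑ b ∈ Finset.Icc 1 M, (-1 : ℤ) ^ b * y b) := by
  classical
  have step0 : ∑ m ∈ Finset.Icc 1 M, (-1 : ℤ) ^ m * z m
      = ∑ m ∈ Finset.Icc 1 (2 * M), (-1 : ℤ) ^ m * z m := by
    apply Finset.sum_subset
    · exact Finset.Icc_subset_Icc_right (by omega)
    · intro m hm hm2
      simp only [Finset.mem_Icc] at hm hm2
      rw [hz m (by omega), mul_zero]
  have step1 : ∑ m ∈ Finset.Icc 1 (2 * M), (-1 : ℤ) ^ m * z m
      = ∑ m ∈ Finset.Icc 1 (2 * M), ∑ p ∈ Finset.range (m - 1),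
          (-1 : ℤ) ^ m * (x (p + 1) * y (m - 1 - p)) := by
    refine Finset.sum_congr rfl fun m hm => ?_
    simp only [Finset.mem_Icc] at hm
    rw [hzd m (by omega), Finset.mul_sum]
  rw [step0, step1, Finset.sum_sigma']
  have step3 : ∑ σ ∈ (Finset.Icc 1 (2 * M)).sigma (fun m => Finset.range (m - 1)),
        (-1 : ℤ) ^ σ.1 * (x (σ.2 + 1) * y (σ.1 - 1 - σ.2))
      = ∑ σ ∈ ((Finset.Icc 1 (2 * M)).sigma (fun m => Finset.range (m - 1))).filter
          (fun σ => σ.2 + 1 ≤ M ∧ 1 ≤ σ.1 - 1 - σ.2 ∧ σ.1 - 1 - σ.2 ≤ M),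
        (-1 : ℤ) ^ σ.1 * (x (σ.2 + 1) * y (σ.1 - 1 - σ.2)) := by
    symm
    apply Finset.sum_filter_of_ne
    intro σ hσ hne
    have hxne : x (σ.2 + 1) ≠ 0 := fun h0 => hne (by rw [h0]; ring)
    have hyne : y (σ.1 - 1 - σ.2) ≠ 0 := fun h0 => hne (by rw [h0]; ring)
    have c1 : σ.2 + 1 ≤ M := by
      by_contra hc; exact hxne (hx _ (by omega))
    have c2 : σ.1 - 1 - σ.2 ≤ M := by
      by_contra hc; exact hyne (hy _ (by omega))
    have c3 : 1 ≤ σ.1 - 1 - σ.2 := by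
      by_contra hc
      exact hyne (by rw [show σ.1 - 1 - σ.2 = 0 by omega]; exact hy0)
    exact ⟨c1, c3, c2⟩
  rw [step3]
  have step4 : ∑ σ ∈ ((Finset.Icc 1 (2 * M)).sigma (fun m => Finset.range (m - 1))).filter
          (fun σ => σ.2 + 1 ≤ M ∧ 1 ≤ σ.1 - 1 - σ.2 ∧ σ.1 - 1 - σ.2 ≤ M),
        (-1 : ℤ) ^ σ.1 * (x (σ.2 + 1) * y (σ.1 - 1 - σ.2))
      = ∑ c ∈ Finset.Icc 1 M ×ˢ Finset.Icc 1 M,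
          (-1 : ℤ) ^ (c.1 + c.2) * (x c.1 * y c.2) := by
    refine Finset.sum_bij' (fun σ _ => ((σ.2 + 1, σ.1 - 1 - σ.2) : ℕ × ℕ))
      (fun c _ => (⟨c.1 + c.2, c.1 - 1⟩ : Σ _ : ℕ, ℕ)) ?_ ?_ ?_ ?_ ?_
    · intro σ hσ
      simp only [Finset.mem_filter, Finset.mem_sigma, Finset.mem_Icc,
        Finset.mem_range, Finset.mem_product] at hσ ⊢
      omega
    · intro c hc
      simp only [Finset.mem_filter, Finset.mem_sigma, Finset.mem_Icc,
        Finset.mem_range, Finset.mem_product] at hc ⊢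
      omega
    · intro σ hσ
      simp only [Finset.mem_filter, Finset.mem_sigma, Finset.mem_Icc,
        Finset.mem_range] at hσ
      obtain ⟨m, p⟩ := σ
      simp only at hσ ⊢
      rw [show p + 1 + (m - 1 - p) = m by omega, show p + 1 - 1 = p by omega]
    · intro c hc
      simp only [Finset.mem_product, Finset.mem_Icc] at hc
      obtain ⟨a, b⟩ := c
      simp only at hc ⊢
      rw [show a - 1 + 1 = a by omega, show a + b - 1 - (a - 1) = b by omega]
    · intro σ hσ
      simp only [Finset.mem_filter, Finset.mem_sigma, Finset.mem_Icc,
        Finset.mem_range] at hσ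
      have he : σ.2 + 1 + (σ.1 - 1 - σ.2) = σ.1 := by omega
      rw [he]
  rw [step4, Finset.sum_product, Finset.sum_mul_sum]
  refine Finset.sum_congr rfl fun a _ => Finset.sum_congr rfl fun b _ => ?_
  rw [pow_add]
  ring



section CompositeFactor

variable (N N' : Matrix (Fin n) (Fin n) ℤ) (v : Fin n)
local notation "E" => Matrix.single v v (1 : ℤ)

lemma composite_factor (hn : 1 ≤ n)
    (hN0 : ∀ x y, 0 ≤ N x y) (hNlt : ∀ x y : Fin n, N x y ≠ 0 → x < y)
    (hd : ∀ x y, x ≠ v → y ≠ v → N' x y = N x y)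
    (hrow0 : ∀ y, N' v y = 0) (hcol0 : ∀ x, N' x v = 0)
    {i j : Fin n} (hiv : i ≠ v) (hvj : j ≠ v)
    (hz : ∀ k : ℕ, 1 ≤ k → (N' ^ k) i j = 0) :
    (∑ m ∈ Finset.Icc 1 n, (-1 : ℤ) ^ m * (N ^ m) i j)
      = (∑ m ∈ Finset.Icc 1 n, (-1 : ℤ) ^ m * (N ^ m) i v)
        * (∑ m ∈ Finset.Icc 1 n, (-1 : ℤ) ^ m * (N ^ m) v j) := by
  have hNvv : N v v = 0 := by
    by_contra h
    exact absurd (hNlt v v h) (lt_irrefl v)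
  have hN'lt : ∀ x y : Fin n, N' x y ≠ 0 → x < y := by
    intro x y h
    by_cases hx : x = v
    · exact absurd (hx ▸ hrow0 y) h
    · by_cases hy : y = v
      · exact absurd (hy ▸ hcol0 x) h
      · exact hNlt x y (by rwa [← hd x y hx hy])
  have hNdec : N = N' + E * N + N * E := by
    ext x y
    simp only [Matrix.add_apply]
    rw [E_mul_apply, mul_E_apply]
    by_cases hx : x = v
    · by_cases hy : y = v
      · simp [hx, hy, hrow0, hNvv]
      · simp [hx, hy, hrow0]
    · by_cases hy : y = v
      · simp [hx, hy, hcol0]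
      · simp [hx, hy, hd x y hx hy]
  have hN'E : N' * E = 0 := by
    ext x y
    rw [mul_E_apply]
    by_cases hy : y = v
    · rw [if_pos hy, hcol0]; rfl
    · rw [if_neg hy]; rfl
  have hEN' : E * N' = 0 := by
    ext x y
    rw [E_mul_apply]
    by_cases hx : x = v
    · rw [if_pos hx, hrow0]; rfl
    · rw [if_neg hx]; rfl
  have hENE : E * N * E = 0 := by
    ext x y
    rw [mul_E_apply]
    by_cases hy : y = v
    · rw [if_pos hy, E_mul_apply]
      by_cases hx : x = v
      · rw [if_pos hx, hNvv]; rfl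
      · rw [if_neg hx]; rfl
    · rw [if_neg hy]; rfl
  have hmid : ∀ (k : ℕ) (x : Fin n), v < x → (N' ^ k * N) x v = 0 := by
    intro k x hvx
    rw [Matrix.mul_apply]
    apply Finset.sum_eq_zero
    intro y _
    by_cases h1 : (N' ^ k) x y = 0
    · rw [h1, zero_mul]
    · have hxy : ¬ ((y : ℕ) < (x : ℕ) + k) := fun hcon =>
        h1 (pow_entry_zero N' hN'lt hcon)
      have h2 : N y v = 0 := by
        by_contra h2
        have hb : (y : ℕ) < (v : ℕ) := hNlt y v h2
        have hb2 : (v : ℕ) < (x : ℕ) := hvx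
        omega
      rw [h2, mul_zero]
  have hbeta : ∀ k : ℕ, E * (N * N' ^ k * N) * E = 0 := by
    intro k
    ext x y
    rw [mul_E_apply]
    by_cases hy : y = v
    · rw [if_pos hy, E_mul_apply]
      by_cases hx : x = v
      · rw [if_pos hx]
        have hvv2 : (N * N' ^ k * N) v v = 0 := by
          rw [mul_assoc, Matrix.mul_apply]
          apply Finset.sum_eq_zero
          intro z _
          by_cases h1 : N v z = 0
          · rw [h1, zero_mul]
          · rw [hmid k z (hNlt v z h1), mul_zero]
        rw [hvv2]; rfl
      · rw [if_neg hx]; rfl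
    · rw [if_neg hy]; rfl
  have hq2 : ∀ q : ℕ, (N * N' ^ q) v v = 0 := by
    intro q
    cases q with
    | zero => rw [pow_zero, mul_one]; exact hNvv
    | succ k =>
      rw [Matrix.mul_apply]
      apply Finset.sum_eq_zero
      intro z _
      rw [e_col N' v hN'E k z, mul_zero]
  have hp2 : ∀ p : ℕ, (N' ^ p * N) v v = 0 := by
    intro p
    cases p with
    | zero => rw [pow_zero, one_mul]; exact hNvv
    | succ k =>
      rw [Matrix.mul_apply]
      apply Finset.sum_eq_zero
      intro z _
      rw [e_row N' v hEN' k z, zero_mul]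
  have hstar := star N N' v hNdec hN'E hEN' hENE hbeta
  have hE3 := e3 N N' v hstar hN'E hEN' hq2 hp2 hiv hvj hz
  apply cauchy n (fun a => (N ^ a) i v) (fun b => (N ^ b) v j) (fun m => (N ^ m) i j)
  · intro a ha
    rw [pow_vanish N hNlt ha]; rfl
  · intro b hb
    rw [pow_vanish N hNlt hb]; rfl
  · exact Matrix.one_apply_ne (Ne.symm hvj)
  · intro m hm
    rw [pow_vanish N hNlt hm]; rfl
  · intro m hm
    have := hE3 (m - 1)
    rwa [show m - 1 + 1 = m by omega] at this

end CompositeFactor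

lemma sign_telescope (c : Fin n → Bool) :
    ∀ {L : ℕ} {v : ℕ → Fin n}, RCh (fun x y => c x ≠ c y) v L →
      (if c (v 0) then (1 : ℤ) else -1) * (if c (v L) then (1 : ℤ) else -1)
        = (-1) ^ L := by
  intro L
  induction L with
  | zero =>
    intro v _
    by_cases h : c (v 0) <;> simp [h]
  | succ L ih =>
    intro v h
    have hL := ih (fun t ht => h t (by omega))
    have hstep : c (v L) ≠ c (v (L + 1)) := h L (by omega)
    have hflip : (if c (v (L + 1)) then (1 : ℤ) else -1)
        = -(if c (v L) then (1 : ℤ) else -1) := by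
      by_cases h1 : c (v L) <;> by_cases h2 : c (v (L + 1)) <;>
        simp [h1, h2] at hstep ⊢
    rw [pow_succ, ← hL, hflip]
    ring

end Stmt13Aux

/-- If `Γ_D` is bipartite and for every prime pair `(i,j)` of `D` the
total number of directed paths from `i` to `j`, namely `∑_(m ≥ 1) ((B-I)^m) i j`
(the terms with `m ≥ n` all vanish by nilpotency), is at most `2`, then `B` is
signable. -/
theorem stmt13 {n : ℕ} (hn : 1 ≤ n) (B : Matrix (Fin n) (Fin n) ℤ)
    (h1 : ∀ i, B i i = 1) (h2 : ∀ i j : Fin n, j < i → B i j = 0)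
    (h3 : ∀ i j : Fin n, i < j → 0 ≤ B i j)
    (hbip : GammaBipartite B)
    (hpaths : ∀ i j : Fin n, PrimePair B i j →
      (∑ m ∈ Finset.Icc 1 n, ((B - 1) ^ m) i j) ≤ 2) :
    IsSignable B⁻¹ := by
  classical
  have hNe : ∀ x y : Fin n, (B - 1) x y = B x y - (if x = y then 1 else 0) := by
    intro x y
    simp [Matrix.sub_apply, Matrix.one_apply]
  have hN0 : ∀ x y : Fin n, 0 ≤ (B - 1) x y := by
    intro x y
    rw [hNe]
    rcases lt_trichotomy x y with h | h | h
    · rw [if_neg (ne_of_lt h)]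
      have := h3 x y h
      omega
    · subst h
      rw [if_pos rfl, h1 x]
      norm_num
    · rw [if_neg (ne_of_lt h).symm, h2 x y h]
      norm_num
  have hNlt : ∀ x y : Fin n, (B - 1) x y ≠ 0 → x < y := by
    intro x y hne
    rw [hNe] at hne
    rcases lt_trichotomy x y with h | h | h
    · exact h
    · exfalso; subst h; rw [if_pos rfl, h1 x] at hne; simp at hne
    · exfalso; rw [if_neg (ne_of_lt h).symm, h2 x y h] at hne; simp at hne
  have hB : (B - 1) + 1 = B := by abel
  obtain ⟨c, hc⟩ := hbip
  set s : Fin n → ℤ := fun x => if c x then 1 else -1 with hs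
  have hs1 : ∀ x, s x = 1 ∨ s x = -1 := by
    intro x; by_cases h : c x <;> simp [hs, h]
  have hss : ∀ x, s x * s x = 1 := by
    intro x; by_cases h : c x <;> simp [hs, h]
  have hinv : ∀ x y : Fin n, x ≠ y →
      B⁻¹ x y = ∑ m ∈ Finset.Icc 1 n, (-1 : ℤ) ^ m * ((B - 1) ^ m) x y := by
    intro x y hxy
    have := Stmt13Aux.inv_entry (B - 1) hNlt hn n le_rfl hxy
    rwa [hB] at this
  have hdiag : ∀ x : Fin n, B⁻¹ x x = 1 := by
    intro x
    have := Stmt13Aux.inv_diag (B - 1) hNlt hn x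
    rwa [hB] at this
  have main : ∀ d : ℕ, ∀ i j : Fin n, i < j → (j : ℕ) - (i : ℕ) ≤ d →
      s i * B⁻¹ i j * s j = |B⁻¹ i j| := by
    intro d
    induction d with
    | zero =>
      intro i j hij hd
      have : (i : ℕ) < (j : ℕ) := hij
      omega
    | succ d ih =>
      intro i j hij hd
      have hij' : i ≠ j := ne_of_lt hij
      by_cases hA0 : B⁻¹ i j = 0
      · rw [hA0]; simp
      by_cases hcomp : CompositePair B i j
      · obtain ⟨v, hiv, hvj, hz⟩ := hcomp
        have hiv' : i ≠ v := ne_of_lt hiv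
        have hvj' : v ≠ j := ne_of_lt hvj
        have hrow0 : ∀ y, (vertexDelete B v - 1) v y = 0 := by
          intro y
          by_cases hyv : y = v
          · subst hyv
            simp [vertexDelete, Matrix.sub_apply, Matrix.one_apply, h1]
          · simp [vertexDelete, Matrix.sub_apply, Matrix.one_apply, hyv, Ne.symm hyv]
        have hcol0 : ∀ x, (vertexDelete B v - 1) x v = 0 := by
          intro x
          by_cases hxv : x = v
          · subst hxv
            simp [vertexDelete, Matrix.sub_apply, Matrix.one_apply, h1]
          · simp [vertexDelete, Matrix.sub_apply, Matrix.one_apply, hxv]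
        have hdd : ∀ x y : Fin n, x ≠ v → y ≠ v →
            (vertexDelete B v - 1) x y = (B - 1) x y := by
          intro x y hx hy
          simp [vertexDelete, Matrix.sub_apply, Matrix.one_apply, hx, hy]
        have hfac := Stmt13Aux.composite_factor (B - 1) (vertexDelete B v - 1) v hn
          hN0 hNlt hdd hrow0 hcol0 hiv' (Ne.symm hvj') hz
        have hij_eq : B⁻¹ i j = B⁻¹ i v * B⁻¹ v j := by
          rw [hinv i j hij', hinv i v hiv', hinv v j hvj']
          exact hfac
        have he1 : (i : ℕ) < (v : ℕ) := hiv
        have he2 : (v : ℕ) < (j : ℕ) := hvj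
        calc s i * B⁻¹ i j * s j
            = (s i * B⁻¹ i v * s v) * (s v * B⁻¹ v j * s j) := by
              rw [hij_eq]
              linear_combination (-(s i * B⁻¹ i v * B⁻¹ v j * s j)) * hss v
          _ = |B⁻¹ i v| * |B⁻¹ v j| := by
              rw [ih i v hiv (by omega), ih v j hvj (by omega)]
          _ = |B⁻¹ i j| := by rw [hij_eq, abs_mul]
      · by_cases hunit : UnitPair B i j
        · have hcij := hc i j ⟨hij, hunit.1, hunit.2⟩
          have hsij : s i * s j = -1 := by
            by_cases hc1 : c i <;> by_cases hc2 : c j <;>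
              simp [hs, hc1, hc2] at hcij ⊢
          have hBval : B⁻¹ i j = -(B i j) := by
            rw [hinv i j hij']
            rw [Finset.sum_eq_single_of_mem 1 (Finset.mem_Icc.mpr ⟨le_rfl, hn⟩)]
            · rw [pow_one, pow_one, hNe, if_neg hij']
              ring
            · intro m hm hne
              have hm2 : 2 ≤ m := by
                simp only [Finset.mem_Icc] at hm
                omega
              rw [hunit.2 m hm2, mul_zero]
          rw [hBval, abs_neg, abs_of_nonneg (by linarith [hunit.1] : (0 : ℤ) ≤ B i j)]
          linear_combination (-(B i j)) * hsij
        · have hzero : ¬ ZeroPair B i j := by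
            intro hzp
            apply hA0
            rw [hinv i j hij']
            apply Finset.sum_eq_zero
            intro m hm
            simp only [Finset.mem_Icc] at hm
            rw [hzp m hm.1, mul_zero]
          have hq := hpaths i j ⟨hij, hzero, hunit, hcomp⟩
          have hA0' : (∑ m ∈ Finset.Icc 1 n, (-1 : ℤ) ^ m * ((B - 1) ^ m) i j) ≠ 0 := by
            rw [← hinv i j hij']; exact hA0
          obtain ⟨L, w, hw0, hwL, hwc, hsign⟩ :=
            Stmt13Aux.primeChain (B - 1) hN0 hNlt hq hA0'
          have hRch : Stmt13Aux.RCh (fun x y => c x ≠ c y) w L := by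
            intro t ht
            obtain ⟨hge1, hge2⟩ := hwc t ht
            have hlt := hNlt (w t) (w (t + 1)) (by omega)
            apply hc
            refine ⟨hlt, ?_, hge2⟩
            have := hNe (w t) (w (t + 1))
            rw [if_neg (ne_of_lt hlt)] at this
            omega
          have htel' : s i * s j = (-1 : ℤ) ^ L := by
            have htel := Stmt13Aux.sign_telescope c hRch
            rw [hw0, hwL] at htel
            exact htel
          rw [hinv i j hij']
          have hpow : (-1 : ℤ) ^ L * (-1) ^ L = 1 := by
            rw [← pow_add]; exact Even.neg_one_pow ⟨L, rfl⟩
          calc s i * (∑ m ∈ Finset.Icc 1 n, (-1 : ℤ) ^ m * ((B - 1) ^ m) i j) * s j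
              = (s i * s j)
                * (∑ m ∈ Finset.Icc 1 n, (-1 : ℤ) ^ m * ((B - 1) ^ m) i j) := by ring
            _ = |∑ m ∈ Finset.Icc 1 n, (-1 : ℤ) ^ m * ((B - 1) ^ m) i j| := by
                rw [htel']
                conv_lhs => rw [hsign]
                rw [← mul_assoc, hpow, one_mul]
  refine ⟨s, hs1, ?_⟩
  intro i j
  rcases lt_trichotomy i j with h | h | h
  · exact main ((j : ℕ) - (i : ℕ)) i j h le_rfl
  · subst h
    rw [hdiag i, mul_one, hss i]
    simp
  · have hz : B⁻¹ i j = 0 := by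
      rw [hinv i j (ne_of_gt h)]
      apply Finset.sum_eq_zero
      intro m hm
      have hji : (j : ℕ) < (i : ℕ) := h
      rw [Stmt13Aux.pow_entry_zero (B - 1) hNlt
        (show (j : ℕ) < (i : ℕ) + m by omega), mul_zero]
    rw [hz]
    simp
end

section
/- Suppose D has no prime pairs. Then B is signable if and only if D is bipartite. -/
open Matrix

section Aux

variable {n : ℕ}

/-- Powers of a strictly upper triangular matrix: `N^m i j ≠ 0 → i + m ≤ j`. -/
lemma aux_pow_support (N : Matrix (Fin n) (Fin n) ℤ)
    (hN : ∀ i j : Fin n, ¬ i < j → N i j = 0) :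
    ∀ m (i j : Fin n), (N ^ m) i j ≠ 0 → (i : ℕ) + m ≤ (j : ℕ) := by
  intro m
  induction m with
  | zero =>
    intro i j h
    rw [pow_zero] at h
    by_cases hij : i = j
    · subst hij; omega
    · simp [Matrix.one_apply_ne hij] at h
  | succ m ih =>
    intro i j h
    rw [pow_succ, Matrix.mul_apply] at h
    obtain ⟨k, -, hk⟩ := Finset.exists_ne_zero_of_sum_ne_zero h
    have h1 := ih i k (left_ne_zero_of_mul hk)
    have h2 : k < j := by
      by_contra hkj
      exact (right_ne_zero_of_mul hk) (hN k j hkj)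
    have := Fin.lt_iff_val_lt_val.mp h2
    omega

lemma aux_pow_nonneg (N : Matrix (Fin n) (Fin n) ℤ)
    (hN : ∀ i j : Fin n, 0 ≤ N i j) :
    ∀ m (i j : Fin n), 0 ≤ (N ^ m) i j := by
  intro m
  induction m with
  | zero =>
    intro i j
    rw [pow_zero]
    by_cases hij : i = j
    · subst hij; simp
    · simp [Matrix.one_apply_ne hij]
  | succ m ih =>
    intro i j
    rw [pow_succ, Matrix.mul_apply]
    exact Finset.sum_nonneg fun k _ => mul_nonneg (ih i k) (hN k j)

lemma aux_neg_pow_apply (N : Matrix (Fin n) (Fin n) ℤ) :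
    ∀ m (i j : Fin n), ((-N) ^ m) i j = (-1 : ℤ) ^ m * (N ^ m) i j := by
  intro m
  induction m with
  | zero => intro i j; simp
  | succ m ih =>
    intro i j
    have lhs : ((-N) ^ (m + 1)) i j = ∑ k, ((-N) ^ m) i k * (-N) k j := by
      rw [pow_succ, Matrix.mul_apply]
    have rhs : (N ^ (m + 1)) i j = ∑ k, (N ^ m) i k * N k j := by
      rw [pow_succ, Matrix.mul_apply]
    rw [lhs, rhs, Finset.mul_sum]
    refine Finset.sum_congr rfl fun k _ => ?_
    rw [ih i k, Matrix.neg_apply]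
    ring

/-- The inverse of `B = 1 + N` as a finite geometric series. -/
lemma aux_inv_entry (B : Matrix (Fin n) (Fin n) ℤ)
    (h1 : ∀ i, B i i = 1) (h2 : ∀ i j : Fin n, j < i → B i j = 0)
    (i j : Fin n) :
    B⁻¹ i j = ∑ m ∈ Finset.range n, (-1 : ℤ) ^ m * ((B - 1) ^ m) i j := by
  set N := B - 1 with hNdef
  have hN : ∀ i j : Fin n, ¬ i < j → N i j = 0 := by
    intro i j hij
    by_cases hij' : i = j
    · subst hij'; simp [hNdef, Matrix.sub_apply, h1, Matrix.one_apply_eq]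
    · have h : j < i := lt_of_le_of_ne (not_lt.mp hij) (fun e => hij' e.symm)
      simp [hNdef, Matrix.sub_apply, h2 i j h, Matrix.one_apply_ne hij']
  have hNn : N ^ n = 0 := by
    ext a b
    rw [Matrix.zero_apply]
    by_contra h
    have := aux_pow_support N hN n a b h
    have := b.isLt
    omega
  have hB : N + 1 = B := sub_add_cancel B 1
  have key : (∑ m ∈ Finset.range n, (-N) ^ m) * B = 1 := by
    have hg := geom_sum_mul (-N) n
    have hz : (-N) ^ n = 0 := by rw [neg_pow, hNn, mul_zero]
    rw [hz, zero_sub] at hg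
    have : -N - 1 = -B := by rw [← hB, neg_add, sub_eq_add_neg]
    rw [this, mul_neg, neg_eq_iff_eq_neg, neg_neg] at hg
    exact hg
  rw [Matrix.inv_eq_left_inv key, Matrix.sum_apply]
  exact Finset.sum_congr rfl fun m _ => aux_neg_pow_apply N m i j

end Aux

/-- If `D` has no prime pairs, then `B` is signable iff `D` is
bipartite. -/
theorem stmt14 {n : ℕ} (hn : 1 ≤ n) (B : Matrix (Fin n) (Fin n) ℤ)
    (h1 : ∀ i, B i i = 1) (h2 : ∀ i j : Fin n, j < i → B i j = 0)
    (h3 : ∀ i j : Fin n, i < j → 0 ≤ B i j)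
    (hnp : ∀ i j : Fin n, ¬PrimePair B i j) :
    IsSignable B⁻¹ ↔
      ∃ c : Fin n → Bool, ∀ i j : Fin n, i < j → 1 ≤ B i j → c i ≠ c j := by
  set N := B - 1 with hNdef
  have hN0 : ∀ i j : Fin n, ¬ i < j → N i j = 0 := by
    intro i j hij
    by_cases hij' : i = j
    · subst hij'; simp [hNdef, Matrix.sub_apply, h1, Matrix.one_apply_eq]
    · have h : j < i := lt_of_le_of_ne (not_lt.mp hij) (fun e => hij' e.symm)
      simp [hNdef, Matrix.sub_apply, h2 i j h, Matrix.one_apply_ne hij']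
  have hNe : ∀ i j : Fin n, i ≠ j → N i j = B i j := by
    intro i j hij
    simp [hNdef, Matrix.sub_apply, Matrix.one_apply_ne hij]
  have hNnn : ∀ i j : Fin n, 0 ≤ N i j := by
    intro i j
    by_cases h : i < j
    · rw [hNe i j (ne_of_lt h)]; exact h3 i j h
    · rw [hN0 i j h]
  have hinv : ∀ i j : Fin n,
      B⁻¹ i j = ∑ m ∈ Finset.range n, (-1 : ℤ) ^ m * (N ^ m) i j :=
    aux_inv_entry B h1 h2
  constructor
  · -- signable → bipartite
    rintro ⟨s, hs1, hs⟩
    refine ⟨fun i => decide (s i = 1), fun i j hij hBij => ?_⟩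
    -- (i, j) is a unit pair
    have hne : i ≠ j := ne_of_lt hij
    have hnz : ¬ZeroPair B i j := by
      intro hz
      have := hz 1 le_rfl
      rw [pow_one, ← hNdef, hNe i j hne] at this
      omega
    have hnc : ¬CompositePair B i j := by
      rintro ⟨v, hiv, hvj, hc⟩
      have := hc 1 le_rfl
      rw [pow_one, Matrix.sub_apply, Matrix.one_apply_ne hne] at this
      have hv : ¬(i ≠ j ∧ (i = v ∨ j = v)) := by
        rintro ⟨-, h | h⟩
        · exact absurd hiv (h ▸ lt_irrefl v)
        · exact absurd hvj (h ▸ lt_irrefl v)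
      rw [vertexDelete, Matrix.of_apply, if_neg hv] at this
      omega
    have hu : UnitPair B i j := by
      have := hnp i j
      rw [PrimePair] at this
      tauto
    -- compute B⁻¹ i j = -(B i j)
    have h1n : 1 ∈ Finset.range n := by
      have := j.isLt
      have := Fin.lt_iff_val_lt_val.mp hij
      simp only [Finset.mem_range]
      omega
    have hval : B⁻¹ i j = -(B i j) := by
      rw [hinv i j, Finset.sum_eq_single 1]
      · rw [pow_one, pow_one, hNe i j hne]; ring
      · intro m _ hm1
        rcases Nat.lt_or_ge m 2 with hm | hm
        · interval_cases m
          · simp [Matrix.one_apply_ne hne]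
          · exact absurd rfl hm1
        · rw [hNdef, hu.2 m hm, mul_zero]
      · intro h; exact absurd h1n h
    have hsij := hs i j
    rw [hval] at hsij
    have habs : |(-(B i j))| = B i j := by
      rw [abs_neg, abs_of_nonneg (h3 i j hij)]
    rw [habs] at hsij
    -- s i * -(B i j) * s j = B i j, B i j ≥ 1 ⇒ s i * s j = -1
    have hss : s i * s j = -1 := by
      rcases hs1 i with hi | hi <;> rcases hs1 j with hj | hj <;>
        rw [hi, hj] at hsij ⊢ <;> [skip; norm_num; norm_num; skip] <;>
        · exfalso; nlinarith
    rcases hs1 i with hi | hi <;> rcases hs1 j with hj | hj <;>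
      rw [hi, hj] at hss <;> simp [hi, hj] at hss ⊢ <;> norm_num at hss
  · -- bipartite → signable
    rintro ⟨c, hc⟩
    set s : Fin n → ℤ := fun i => if c i then 1 else -1 with hsdef
    have hs1 : ∀ i, s i = 1 ∨ s i = -1 := by
      intro i; by_cases h : c i <;> simp [hsdef, h]
    have hssq : ∀ i, s i * s i = 1 := by
      intro i; rcases hs1 i with h | h <;> rw [h] <;> norm_num
    have hedge : ∀ i j : Fin n, N i j ≠ 0 → s i * s j = -1 := by
      intro i j h
      have hij : i < j := by by_contra hij; exact h (hN0 i j hij)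
      have hb : 1 ≤ B i j := by
        have := hNe i j (ne_of_lt hij) ▸ h
        have := h3 i j hij
        rw [hNe i j (ne_of_lt hij)] at h
        omega
      have := hc i j hij hb
      by_cases h1 : c i <;> by_cases h2 : c j <;> simp [hsdef, h1, h2] at this ⊢
    have hparity : ∀ m (i j : Fin n), (N ^ m) i j ≠ 0 → s i * s j = (-1) ^ m := by
      intro m
      induction m with
      | zero =>
        intro i j h
        rw [pow_zero] at h ⊢
        by_cases hij : i = j
        · subst hij; exact hssq i
        · simp [Matrix.one_apply_ne hij] at h
      | succ m ih =>
        intro i j h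
        rw [pow_succ, Matrix.mul_apply] at h
        obtain ⟨k, -, hk⟩ := Finset.exists_ne_zero_of_sum_ne_zero h
        have h1 := ih i k (left_ne_zero_of_mul hk)
        have h2 := hedge k j (right_ne_zero_of_mul hk)
        have e : (s i * s k) * (s k * s j) = s i * s j * (s k * s k) := by ring
        have : s i * s j = (s i * s k) * (s k * s j) := by
          rw [e, hssq k, mul_one]
        rw [this, h1, h2, pow_succ]
    refine ⟨s, hs1, fun i j => ?_⟩
    have hkey : s i * B⁻¹ i j * s j = ∑ m ∈ Finset.range n, (N ^ m) i j := by
      rw [hinv i j, Finset.mul_sum, Finset.sum_mul]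
      refine Finset.sum_congr rfl fun m _ => ?_
      by_cases h : (N ^ m) i j = 0
      · rw [h]; ring
      · have := hparity m i j h
        have hsq : ((-1 : ℤ) ^ m) * ((-1 : ℤ) ^ m) = 1 := by
          rw [← pow_add, Even.neg_one_pow ⟨m, rfl⟩]
        calc s i * ((-1 : ℤ) ^ m * (N ^ m) i j) * s j
            = (s i * s j) * (-1 : ℤ) ^ m * (N ^ m) i j := by ring
          _ = (N ^ m) i j := by rw [this, hsq, one_mul]
    have hnn : 0 ≤ ∑ m ∈ Finset.range n, (N ^ m) i j :=
      Finset.sum_nonneg fun m _ => aux_pow_nonneg N hNnn m i j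
    have habs : |s i| = 1 := by rcases hs1 i with h | h <;> rw [h] <;> norm_num
    have habsj : |s j| = 1 := by rcases hs1 j with h | h <;> rw [h] <;> norm_num
    calc s i * B⁻¹ i j * s j = |s i * B⁻¹ i j * s j| := by
          rw [abs_of_nonneg (hkey ▸ hnn)]
      _ = |B⁻¹ i j| := by rw [abs_mul, abs_mul, habs, habsj, one_mul, mul_one]
end

section
/- Let (i_1,j_1), (i_2,j_2), …, (i_r,j_r) be prime pairs of D such that j_k ≤ i_{k+1} for all 1 ≤ k ≤ r−1 and B_{i_k,j_k} ≥ 1 for all k. Let B' be the matrix obtained from B by subtracting 1 from the entry in position (i_k,j_k) for each 1 ≤ k ≤ r, and let D' be the directed multigraph with adjacency matrix B'−I. If D' is bipartite (there is a function c from {1,…,n} to {0,1} with c_i ≠ c_j whenever i < j and B'_{i,j} ≥ 1), then B is signable. -/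
open Matrix

namespace Stmt15Aux

variable {n : ℕ}

/-- last vertex of the walk `a :: l` -/
def mylast (a : Fin n) (l : List (Fin n)) : Fin n := l.getLast?.getD a

@[simp] lemma mylast_nil (a : Fin n) : mylast a [] = a := rfl

lemma mylast_cons (a b : Fin n) (l : List (Fin n)) : mylast a (b :: l) = mylast b l := by
  cases l with
  | nil => rfl
  | cons c t =>
      unfold mylast
      rw [List.getLast?_eq_getLast (l := c :: t) (by simp)]
      rfl

lemma mylast_congr (a a' : Fin n) {l : List (Fin n)} (h : l ≠ []) :
    mylast a l = mylast a' l := by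
  cases l with
  | nil => exact absurd rfl h
  | cons b t => rw [mylast_cons, mylast_cons]

lemma chain_le_last {R : Fin n → Fin n → Prop} (hR : ∀ x y, R x y → x < y) :
    ∀ (l : List (Fin n)) (a : Fin n), List.Chain R a l → a ≤ mylast a l := by
  intro l
  induction l with
  | nil => intro a _; simp
  | cons b t ih =>
      intro a h
      rcases List.chain_cons.mp h with ⟨h1, h2⟩
      rw [mylast_cons]
      exact le_trans (le_of_lt (hR _ _ h1)) (ih b h2)

lemma chain_lt_last {R : Fin n → Fin n → Prop} (hR : ∀ x y, R x y → x < y)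
    (l : List (Fin n)) (a : Fin n) (h : List.Chain R a l) (hne : l ≠ []) :
    a < mylast a l := by
  cases l with
  | nil => exact absurd rfl hne
  | cons b t =>
      rcases List.chain_cons.mp h with ⟨h1, h2⟩
      rw [mylast_cons]
      exact lt_of_lt_of_le (hR _ _ h1) (chain_le_last hR t b h2)

lemma chain_transfer {P Q : Matrix (Fin n) (Fin n) ℤ}
    (hP : ∀ x y, (1:ℤ) ≤ P x y → x < y) :
    ∀ (l : List (Fin n)) (a : Fin n), List.Chain (fun x y => 1 ≤ P x y) a l →
      (∀ x y, a ≤ x → Q x y = P x y) → List.Chain (fun x y => 1 ≤ Q x y) a l := by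
  intro l
  induction l with
  | nil => intro a _ _; exact List.Chain.nil
  | cons b t ih =>
      intro a h hagree
      rcases List.chain_cons.mp h with ⟨h1, h2⟩
      refine List.chain_cons.mpr ⟨?_, ?_⟩
      · rw [hagree a b le_rfl]; exact h1
      · exact ih b h2 (fun x y hx => hagree x y (le_trans (le_of_lt (hP _ _ h1)) hx))

lemma std_apply (a b x y : Fin n) (v : ℤ) :
    Matrix.single a b v x y = if a = x ∧ b = y then v else 0 := rfl

lemma std_nonneg (a b x y : Fin n) : 0 ≤ Matrix.single a b (1:ℤ) x y := by
  rw [std_apply]; split <;> norm_num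

lemma std_mul_apply (a c x y : Fin n) (M : Matrix (Fin n) (Fin n) ℤ) :
    (Matrix.single a c (1:ℤ) * M) x y = if a = x then M c y else 0 := by
  rw [Matrix.mul_apply]
  by_cases h : a = x
  · subst h
    simp [std_apply]
  · simp [std_apply, h]

lemma mul_nonneg_e {M N : Matrix (Fin n) (Fin n) ℤ}
    (hM : ∀ i j, 0 ≤ M i j) (hN : ∀ i j, 0 ≤ N i j) : ∀ i j, 0 ≤ (M * N) i j := by
  intro i j
  rw [Matrix.mul_apply]
  exact Finset.sum_nonneg fun k _ => mul_nonneg (hM i k) (hN k j)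

lemma pow_nonneg_e {M : Matrix (Fin n) (Fin n) ℤ}
    (hM : ∀ i j, 0 ≤ M i j) : ∀ (m : ℕ) i j, 0 ≤ (M ^ m) i j := by
  intro m
  induction m with
  | zero =>
      intro i j
      rw [pow_zero, Matrix.one_apply]
      split <;> norm_num
  | succ m ih =>
      rw [pow_succ]
      exact mul_nonneg_e ih hM

lemma pow_apply_ne {P : Matrix (Fin n) (Fin n) ℤ}
    (hPu : ∀ i j, P i j ≠ 0 → i < j) :
    ∀ (m : ℕ) (i j : Fin n), (P ^ m) i j ≠ 0 → (i : ℕ) + m ≤ (j : ℕ) := by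
  intro m
  induction m with
  | zero =>
      intro i j h
      rw [pow_zero, Matrix.one_apply] at h
      split at h
      · next heq => subst heq; omega
      · exact absurd rfl h
  | succ m ih =>
      intro i j h
      rw [pow_succ', Matrix.mul_apply] at h
      obtain ⟨k, _, hk⟩ := Finset.exists_ne_zero_of_sum_ne_zero h
      rcases mul_ne_zero_iff.mp hk with ⟨h1, h2⟩
      have hik : (i : ℕ) < (k : ℕ) := hPu i k h1
      have := ih k j h2
      omega

lemma pow_card_zero {P : Matrix (Fin n) (Fin n) ℤ}
    (hPu : ∀ i j, P i j ≠ 0 → i < j) : P ^ n = 0 := by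
  ext i j
  by_contra h
  have := pow_apply_ne hPu n i j h
  have := j.isLt
  omega

lemma exists_chain_of_pow {M : Matrix (Fin n) (Fin n) ℤ} :
    ∀ (m : ℕ) (x y : Fin n), (M ^ m) x y ≠ 0 →
      ∃ l : List (Fin n), l.length = m ∧
        List.Chain (fun u v => M u v ≠ 0) x l ∧ mylast x l = y := by
  intro m
  induction m with
  | zero =>
      intro x y h
      rw [pow_zero, Matrix.one_apply] at h
      refine ⟨[], rfl, List.Chain.nil, ?_⟩
      simp only [mylast_nil]
      by_contra hxy
      rw [if_neg hxy] at h
      exact h rfl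
  | succ m ih =>
      intro x y h
      rw [pow_succ', Matrix.mul_apply] at h
      obtain ⟨z, _, hz⟩ := Finset.exists_ne_zero_of_sum_ne_zero h
      rcases mul_ne_zero_iff.mp hz with ⟨h1, h2⟩
      obtain ⟨l, hlen, hch, hlast⟩ := ih z y h2
      exact ⟨z :: l, by simp [hlen], List.chain_cons.mpr ⟨h1, hch⟩,
        by rw [mylast_cons]; exact hlast⟩

lemma chain_upgrade {N P : Matrix (Fin n) (Fin n) ℤ} {A Bb : Fin n}
    (hNu : ∀ i j, N i j ≠ 0 → i < j)
    (hstep : ∀ u v, N u v ≠ 0 → A ≤ u → v ≤ Bb → ¬(u = A ∧ v = Bb) → 1 ≤ P u v) :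
    ∀ (l : List (Fin n)) (x : Fin n), List.Chain (fun u v => N u v ≠ 0) x l →
      A ≤ x → mylast x l = Bb → (x = A → l.length ≠ 1) →
      List.Chain (fun u v => 1 ≤ P u v) x l := by
  intro l
  induction l with
  | nil => intro x _ _ _ _; exact List.Chain.nil
  | cons v l' ih =>
      intro x hch hax hlast hguard
      rcases List.chain_cons.mp hch with ⟨h1, h2⟩
      rw [mylast_cons] at hlast
      have hvB : v ≤ Bb := hlast ▸ chain_le_last hNu l' v h2
      refine List.chain_cons.mpr ⟨?_, ?_⟩
      · refine hstep x v h1 hax hvB ?_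
        rintro ⟨rfl, rfl⟩
        have hne' : l' ≠ [] := by
          intro hnil
          exact hguard rfl (by simp [hnil])
        have := chain_lt_last hNu l' v h2 hne'
        rw [hlast] at this
        exact lt_irrefl _ this
      · refine ih v h2 (le_trans hax (le_of_lt (hNu _ _ h1))) hlast ?_
        intro hvA
        exact absurd hvA (ne_of_gt (lt_of_le_of_lt hax (hNu _ _ h1)))


/-- the jump matrix of a list of witnessed pairs -/
def FL (L : List (Fin n × List (Fin n))) : Matrix (Fin n) (Fin n) ℤ :=
  (L.map (fun w => Matrix.single w.1 (mylast w.1 w.2) (1:ℤ))).sum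

lemma FL_nil : FL ([] : List (Fin n × List (Fin n))) = 0 := rfl

lemma FL_cons (w : Fin n × List (Fin n)) (L : List (Fin n × List (Fin n))) :
    FL (w :: L) = Matrix.single w.1 (mylast w.1 w.2) (1:ℤ) + FL L := by
  simp [FL]

lemma X_mul_FL {a c : Fin n} (hac : a ≠ c) :
    ∀ (L : List (Fin n × List (Fin n))), (∀ w ∈ L, w.1 ≠ c) →
      Matrix.single a c (1:ℤ) * FL L = 0 := by
  intro L
  induction L with
  | nil => intro _; rw [FL_nil, mul_zero]
  | cons w L ih =>
      intro h
      rw [FL_cons, mul_add, ih (fun w' hw' => h w' (List.mem_cons_of_mem _ hw')), add_zero]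
      ext x y
      rw [std_mul_apply, Matrix.zero_apply]
      split
      · rw [std_apply, if_neg]
        rintro ⟨h1, -⟩
        exact (h w (List.mem_cons_self)) h1
      · rfl


lemma POS (t : ℕ) : ∀ (P : Matrix (Fin n) (Fin n) ℤ) (L : List (Fin n × List (Fin n))),
    (L.map (fun w => w.2.length)).sum = t →
    (∀ i j, 0 ≤ P i j) → (∀ i j, P i j ≠ 0 → i < j) →
    (∀ w ∈ L, w.2 ≠ []) →
    (∀ w ∈ L, List.Chain (fun x y => 1 ≤ P x y) w.1 w.2) →
    List.Pairwise (fun w w' => mylast w.1 w.2 ≤ w'.1) L →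
    ∃ C : Matrix (Fin n) (Fin n) ℤ, (1 - P + FL L) * C = 1 ∧ ∀ i j, 0 ≤ C i j := by
  induction t using Nat.strong_induction_on with
  | _ t ih =>
  intro P L hlen hP0 hPu hne hch hpw
  have hPlt : ∀ x y : Fin n, (1:ℤ) ≤ P x y → x < y := fun x y h =>
    hPu x y (by intro h0; rw [h0] at h; norm_num at h)
  cases L with
  | nil =>
      refine ⟨∑ m ∈ Finset.range n, P ^ m, ?_, ?_⟩
      · rw [FL_nil, add_zero]
        have h := mul_geom_sum P n
        rw [pow_card_zero hPu] at h
        have h2 : (1 - P) * ∑ m ∈ Finset.range n, P ^ m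
            = -((P - 1) * ∑ m ∈ Finset.range n, P ^ m) := by noncomm_ring
        rw [h2, h]
        norm_num
      · intro i j
        rw [Matrix.sum_apply]
        exact Finset.sum_nonneg fun m _ => pow_nonneg_e hP0 m i j
  | cons w L' =>
  obtain ⟨a, l⟩ := w
  have hhead : ∀ w' ∈ L', mylast a l ≤ w'.1 := (List.pairwise_cons.mp hpw).1
  have hpw' : List.Pairwise (fun w w' => mylast w.1 w.2 ≤ w'.1) L' :=
    (List.pairwise_cons.mp hpw).2
  cases l with
  | nil => exact absurd rfl (hne (a, []) (List.mem_cons_self))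
  | cons c l₂ =>
  have hchal : List.Chain (fun x y => 1 ≤ P x y) a (c :: l₂) :=
    hch (a, c :: l₂) (List.mem_cons_self)
  rcases List.chain_cons.mp hchal with ⟨hac, hcl⟩
  have haclt : a < c := hPlt a c hac
  cases l₂ with
  | nil =>
      -- single edge a → c : absorb it into P
      set P₂ := P - Matrix.single a c 1 with hP₂
      have hP₂app : ∀ x y, P₂ x y = P x y - if a = x ∧ c = y then 1 else 0 := by
        intro x y; rw [hP₂, Matrix.sub_apply, std_apply]
      have hP₂0 : ∀ i j, 0 ≤ P₂ i j := by
        intro i j; rw [hP₂app]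
        split
        · next h => rcases h with ⟨rfl, rfl⟩; omega
        · simpa using hP0 i j
      have hP₂u : ∀ i j, P₂ i j ≠ 0 → i < j := by
        intro i j h
        rw [hP₂app] at h
        split at h
        · next hh => rcases hh with ⟨rfl, rfl⟩; exact haclt
        · exact hPu i j (by simpa using h)
      have hlast : mylast a [c] = c := rfl
      have hch' : ∀ w' ∈ L', List.Chain (fun x y => 1 ≤ P₂ x y) w'.1 w'.2 := by
        intro w' hw'
        refine chain_transfer hPlt w'.2 w'.1 (hch w' (List.mem_cons_of_mem _ hw')) ?_
        intro x y hx
        rw [hP₂app, if_neg, sub_zero]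
        rintro ⟨rfl, -⟩
        have hcw : c ≤ w'.1 := by
          have := hhead w' hw'; rwa [hlast] at this
        exact absurd (haclt.trans_le (hcw.trans hx)) (lt_irrefl a)
      have hmeas : (L'.map (fun w => w.2.length)).sum < t := by
        rw [← hlen]; simp
      obtain ⟨C, hC1, hC0⟩ := ih _ hmeas P₂ L' rfl hP₂0 hP₂u
        (fun w' hw' => hne w' (List.mem_cons_of_mem _ hw')) hch' hpw'
      refine ⟨C, ?_, hC0⟩
      have heq : 1 - P + FL ((a, [c]) :: L') = 1 - P₂ + FL L' := by
        rw [FL_cons]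
        show 1 - P + (Matrix.single a (mylast a [c]) 1 + FL L') = 1 - P₂ + FL L'
        rw [hlast, hP₂]
        noncomm_ring
      rw [heq]
      exact hC1
  | cons d rest =>
  set l₂ := d :: rest with hl₂def
  have hl₂ne : l₂ ≠ [] := by simp [hl₂def]
  have hcd : (1:ℤ) ≤ P c d := (List.chain_cons.mp hcl).1
  have hdrest : List.Chain (fun x y => 1 ≤ P x y) d rest := (List.chain_cons.mp hcl).2
  have hcdlt : c < d := hPlt c d hcd
  have hclast : c < mylast c l₂ := chain_lt_last hPlt l₂ c hcl hl₂ne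
  have hml : mylast a (c :: l₂) = mylast c l₂ := mylast_cons a c l₂
  have hml2 : mylast a l₂ = mylast c l₂ := mylast_congr a c hl₂ne
  set X := Matrix.single a c (1:ℤ) with hX
  set P' := P + X * P - X with hP'
  have hP'app : ∀ x y, P' x y = P x y + (if a = x then P c y else 0)
      - (if a = x ∧ c = y then 1 else 0) := by
    intro x y
    rw [hP', Matrix.sub_apply, Matrix.add_apply, hX, std_mul_apply, std_apply]
  have hP'0 : ∀ i j, 0 ≤ P' i j := by
    intro i j; rw [hP'app]
    by_cases h1 : a = i
    · subst h1
      rw [if_pos rfl]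
      by_cases h2 : c = j
      · subst h2
        rw [if_pos ⟨rfl, rfl⟩]
        have h3 : P c c = 0 := by
          by_contra hc0; exact lt_irrefl c (hPu c c hc0)
        rw [h3]; omega
      · rw [if_neg (by rintro ⟨-, h⟩; exact h2 h)]
        have := hP0 a j; have := hP0 c j; omega
    · rw [if_neg h1, if_neg (by rintro ⟨h, -⟩; exact h1 h)]
      have := hP0 i j; omega
  have hP'u : ∀ i j, P' i j ≠ 0 → i < j := by
    intro i j h
    rw [hP'app] at h
    by_cases h1 : a = i
    · subst h1
      by_cases h2 : c = j
      · subst h2; exact haclt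
      · rw [if_pos rfl, if_neg (by rintro ⟨-, h⟩; exact h2 h), sub_zero] at h
        have hor : P a j ≠ 0 ∨ P c j ≠ 0 := by
          by_contra hno
          push_neg at hno
          rw [hno.1, hno.2] at h
          norm_num at h
        rcases hor with h' | h'
        · exact hPu a j h'
        · exact haclt.trans (hPu c j h')
    · rw [if_neg h1, if_neg (by rintro ⟨h, -⟩; exact h1 h)] at h
      exact hPu i j (by simpa using h)
  set L₂ := (a, l₂) :: L' with hL₂
  have hmeas : (L₂.map (fun w => w.2.length)).sum < t := by
    rw [← hlen, hL₂]; simp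
  have hne₂ : ∀ w ∈ L₂, w.2 ≠ [] := by
    intro w hw
    rcases List.mem_cons.mp hw with h | h
    · subst h; exact hl₂ne
    · exact hne w (List.mem_cons_of_mem _ h)
  have hrowa : ∀ x y : Fin n, a < x → P' x y = P x y := by
    intro x y hx
    rw [hP'app, if_neg (ne_of_lt hx), if_neg (by rintro ⟨h, -⟩; exact (ne_of_lt hx) h),
      sub_zero, add_zero]
  have hch₂ : ∀ w' ∈ L₂, List.Chain (fun x y => 1 ≤ P' x y) w'.1 w'.2 := by
    intro w' hw'
    rcases List.mem_cons.mp hw' with h | h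
    · subst h
      show List.Chain (fun x y => 1 ≤ P' x y) a l₂
      rw [hl₂def]
      refine List.chain_cons.mpr ⟨?_, ?_⟩
      · rw [hP'app, if_pos rfl, if_neg (by rintro ⟨-, h⟩; exact (ne_of_lt hcdlt) h)]
        have := hP0 a d; omega
      · refine chain_transfer hPlt rest d hdrest ?_
        intro x y hx
        exact hrowa x y (haclt.trans (hcdlt.trans_le hx))
    · refine chain_transfer hPlt w'.2 w'.1 (hch w' (List.mem_cons_of_mem _ h)) ?_
      intro x y hx
      have hw1 : mylast a (c :: l₂) ≤ w'.1 := hhead w' h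
      refine hrowa x y ?_
      have : c < w'.1 := by
        rw [hml] at hw1; exact hclast.trans_le hw1
      exact haclt.trans (this.trans_le hx)
  have hpw₂ : List.Pairwise (fun w w' => mylast w.1 w.2 ≤ w'.1) L₂ := by
    rw [hL₂, List.pairwise_cons]
    refine ⟨fun w' hw' => ?_, hpw'⟩
    have := hhead w' hw'
    rw [hml] at this
    show mylast a l₂ ≤ w'.1
    rw [hml2]
    exact this
  obtain ⟨C', hC'1, hC'0⟩ := ih _ hmeas P' L₂ rfl hP'0 hP'u hne₂ hch₂ hpw₂
  have hXX : X * X = 0 := by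
    ext x y
    rw [hX, std_mul_apply, Matrix.zero_apply]
    split
    · rw [std_apply, if_neg (by rintro ⟨h, -⟩; exact (ne_of_lt haclt) h)]
    · rfl
  have hXF : X * FL ((a, c :: l₂) :: L') = 0 := by
    apply X_mul_FL (ne_of_lt haclt)
    intro w' hw'
    rcases List.mem_cons.mp hw' with h | h
    · subst h; exact ne_of_lt haclt
    · have := hhead w' h
      rw [hml] at this
      exact ne_of_gt (hclast.trans_le this)
  have hFLeq : FL L₂ = FL ((a, c :: l₂) :: L') := by
    rw [hL₂, FL_cons, FL_cons]
    show Matrix.single a (mylast a l₂) 1 + FL L'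
      = Matrix.single a (mylast a (c :: l₂)) 1 + FL L'
    rw [hml, hml2]
  have hkey : (1 + X) * (1 - P + FL ((a, c :: l₂) :: L')) = 1 - P' + FL L₂ := by
    have hexp : (1 + X) * (1 - P + FL ((a, c :: l₂) :: L'))
        = 1 - P + FL ((a, c :: l₂) :: L') + X - X * P
          + X * FL ((a, c :: l₂) :: L') := by noncomm_ring
    rw [hexp, hXF, hFLeq, hP']
    noncomm_ring
  have h1mX : (1 - X) * (1 + X) = 1 := by
    have h : (1 - X) * (1 + X) = 1 - X * X := by noncomm_ring
    rw [h, hXX, sub_zero]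
  refine ⟨C' * (1 + X), ?_, ?_⟩
  · have hA : (1 - P + FL ((a, c :: l₂) :: L')) = (1 - X) * (1 - P' + FL L₂) := by
      rw [← hkey, ← mul_assoc, h1mX, one_mul]
    rw [hA, mul_assoc, ← mul_assoc (1 - P' + FL L₂), hC'1, one_mul]
    exact h1mX
  · intro i j
    refine mul_nonneg_e hC'0 ?_ i j
    intro x y
    rw [Matrix.add_apply, Matrix.one_apply, hX]
    have h1 := std_nonneg a c x y
    split <;> omega


end Stmt15Aux


open Stmt15Aux in
/-- Let `(i₁,j₁), …, (i_r,j_r)` be prime pairs of `D` with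
`j_k ≤ i_(k+1)` for all `k` and an edge from `i_k` to `j_k` in `D` for each `k`.
Let `B'` be obtained from `B` by subtracting `1` from the entry in position
`(i_k, j_k)` for each `k`.  If the digraph `D'` with adjacency matrix `B' - I` is
bipartite, then `B` is signable. -/
theorem stmt15 {n : ℕ} (hn : 1 ≤ n) (B : Matrix (Fin n) (Fin n) ℤ)
    (h1 : ∀ i, B i i = 1) (h2 : ∀ i j : Fin n, j < i → B i j = 0)
    (h3 : ∀ i j : Fin n, i < j → 0 ≤ B i j)
    (r : ℕ) (p : Fin r → Fin n × Fin n)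
    (hprime : ∀ k : Fin r, PrimePair B (p k).1 (p k).2)
    (hchain : ∀ k : ℕ, (h : k + 1 < r) →
      (p ⟨k, Nat.lt_of_succ_lt h⟩).2 ≤ (p ⟨k + 1, h⟩).1)
    (hedge : ∀ k : Fin r, 1 ≤ B (p k).1 (p k).2)
    (B' : Matrix (Fin n) (Fin n) ℤ)
    (hB' : B' = B - ∑ k : Fin r, Matrix.single (p k).1 (p k).2 1)
    (hbip : ∃ c : Fin n → Bool, ∀ i j : Fin n, i < j → 1 ≤ B' i j → c i ≠ c j) :
    IsSignable B⁻¹ := by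
  show ∃ s : Fin n → ℤ, (∀ i, s i = 1 ∨ s i = -1) ∧ ∀ i j, s i * B⁻¹ i j * s j = |B⁻¹ i j|
  classical
  obtain ⟨c, hc⟩ := hbip
  set s : Fin n → ℤ := fun i => if c i then 1 else -1 with hs
  have hsv : ∀ i, s i = 1 ∨ s i = -1 := by
    intro i; by_cases h : c i <;> simp [hs, h]
  have hss : ∀ i, s i * s i = 1 := by
    intro i; rcases hsv i with h | h <;> rw [h] <;> norm_num
  have hsne : ∀ i j, c i ≠ c j → s i * s j = -1 := by
    intro i j h
    by_cases hi : c i <;> by_cases hj : c j <;> simp [hs, hi, hj] at h ⊢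
  have hsor : ∀ i j, s i * s j = 1 ∨ s i * s j = -1 := by
    intro i j
    rcases hsv i with h | h <;> rcases hsv j with h' | h' <;> rw [h, h'] <;> norm_num
  have hlt : ∀ k : Fin r, (p k).1 < (p k).2 := fun k => (hprime k).1
  -- ordering facts on the pairs
  have hphiN : ∀ (b : ℕ) (hb : b < r) (a : ℕ) (ha : a < b),
      (p ⟨a, by omega⟩).2 ≤ (p ⟨b, hb⟩).1 := by
    intro b
    induction b with
    | zero => intro hb a ha; omega
    | succ b ihb =>
        intro hb a ha
        rcases Nat.lt_succ_iff_lt_or_eq.mp ha with h | h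
        · have hbr : b < r := by omega
          have hh1 := ihb hbr a h
          have hh2 := hlt ⟨b, hbr⟩
          have hh3 := hchain b hb
          exact le_trans hh1 (le_trans (le_of_lt hh2) hh3)
        · subst h
          exact hchain a hb
  have hphi : ∀ k l : Fin r, k < l → (p k).2 ≤ (p l).1 := by
    intro k l hkl
    have := hphiN (l : ℕ) l.isLt (k : ℕ) hkl
    simpa using this
  have hpinj : ∀ k k' : Fin r, (p k).1 = (p k').1 → (p k).2 = (p k').2 → k = k' := by
    intro k k' hh1 hh2
    rcases lt_trichotomy k k' with h | h | h
    · exfalso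
      have hle := hphi k k' h
      rw [← hh1] at hle
      exact absurd (lt_of_lt_of_le (hlt k) hle) (lt_irrefl _)
    · exact h
    · exfalso
      have hle := hphi k' k h
      rw [hh1] at hle
      exact absurd (lt_of_lt_of_le (hlt k') hle) (lt_irrefl _)
  set bad : Fin r → Prop := fun k => s (p k).1 * s (p k).2 = 1 with hbad
  set Fb : Matrix (Fin n) (Fin n) ℤ :=
    ∑ k ∈ Finset.univ.filter bad, Matrix.single (p k).1 (p k).2 (1:ℤ) with hFb
  have hFbapp : ∀ i j, Fb i j
      = ∑ k ∈ Finset.univ.filter bad, (if (p k).1 = i ∧ (p k).2 = j then (1:ℤ) else 0) := by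
    intro i j; rw [hFb, Matrix.sum_apply]; rfl
  have hFb1 : ∀ k : Fin r, bad k → Fb (p k).1 (p k).2 = 1 := by
    intro k hk
    rw [hFbapp, Finset.sum_eq_single k]
    · simp
    · intro k' _ hne'
      rw [if_neg]
      rintro ⟨ha, hb2⟩
      exact hne' (hpinj k' k ha hb2)
    · intro hnk
      exact absurd (Finset.mem_filter.mpr ⟨Finset.mem_univ k, hk⟩) hnk
  have hFb0 : ∀ i j, (∀ k : Fin r, bad k → ¬((p k).1 = i ∧ (p k).2 = j)) → Fb i j = 0 := by
    intro i j h
    rw [hFbapp]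
    exact Finset.sum_eq_zero fun k hk => if_neg (h k (Finset.mem_filter.mp hk).2)
  have hbadB1 : ∀ k : Fin r, bad k → B (p k).1 (p k).2 = 1 := by
    intro k hk
    by_contra hB2
    have h2B : 2 ≤ B (p k).1 (p k).2 := by have := hedge k; omega
    have hB'1 : 1 ≤ B' (p k).1 (p k).2 := by
      rw [hB']
      simp only [Matrix.sub_apply]
      have hSS : (∑ k' : Fin r, Matrix.single (p k').1 (p k').2 (1:ℤ)) (p k).1 (p k).2
          = 1 := by
        rw [Matrix.sum_apply, Finset.sum_eq_single k]
        · simp [std_apply]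
        · intro k' _ hne'
          rw [std_apply, if_neg]
          rintro ⟨ha, hb2⟩
          exact hne' (hpinj k' k ha hb2)
        · intro hnk; exact absurd (Finset.mem_univ k) hnk
      rw [hSS]; omega
    have hcc := hsne _ _ (hc _ _ (hlt k) hB'1)
    exact absurd (hk.symm.trans hcc) (by norm_num)
  set P : Matrix (Fin n) (Fin n) ℤ := B - 1 - Fb with hP
  have hPapp : ∀ i j, P i j = B i j - (1 : Matrix (Fin n) (Fin n) ℤ) i j - Fb i j := by
    intro i j; rw [hP]; simp [Matrix.sub_apply]
  have hFbdiag : ∀ i, Fb i i = 0 := by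
    intro i
    refine hFb0 i i fun k _ hcon => ?_
    have : (p k).1 = (p k).2 := by rw [hcon.1, hcon.2]
    exact absurd (hlt k) (by rw [this]; exact lt_irrefl _)
  have hFblow : ∀ i j : Fin n, ¬ i < j → Fb i j = 0 := by
    intro i j hij
    refine hFb0 i j fun k _ hcon => ?_
    exact hij (hcon.1 ▸ hcon.2 ▸ hlt k)
  have hP0 : ∀ i j, 0 ≤ P i j := by
    intro i j
    rw [hPapp]
    rcases lt_trichotomy i j with hij | rfl | hij
    · rw [Matrix.one_apply_ne (ne_of_lt hij)]
      by_cases hex : ∃ k : Fin r, bad k ∧ (p k).1 = i ∧ (p k).2 = j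
      · obtain ⟨k, hk, hk1, hk2⟩ := hex
        have hv := hFb1 k hk
        rw [hk1, hk2] at hv
        have hB := hedge k
        rw [hk1, hk2] at hB
        omega
      · rw [hFb0 i j (fun k hk hcon => hex ⟨k, hk, hcon⟩)]
        have := h3 i j hij
        omega
    · rw [Matrix.one_apply_eq, h1 i, hFbdiag i]
      omega
    · rw [Matrix.one_apply_ne (ne_of_gt hij), h2 i j hij,
        hFblow i j (by intro h; exact absurd (h.trans hij) (lt_irrefl _))]
      omega
  have hPu : ∀ i j, P i j ≠ 0 → i < j := by
    intro i j h
    by_contra hnot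
    apply h
    rw [hPapp]
    rcases eq_or_lt_of_le (le_of_not_gt hnot) with heq | hij
    · subst heq
      rw [Matrix.one_apply_eq, h1 j, hFbdiag j]
      ring
    · rw [Matrix.one_apply_ne (ne_of_gt hij), h2 i j hij, hFblow i j hnot]
      ring
  -- the conjugated matrix
  have hA : (1 : Matrix (Fin n) (Fin n) ℤ) - P + Fb
      = Matrix.diagonal s * B * Matrix.diagonal s := by
    ext i j
    rw [Matrix.mul_diagonal, Matrix.diagonal_mul]
    rw [Matrix.add_apply, Matrix.sub_apply, hPapp]
    rcases lt_trichotomy i j with hij | rfl | hij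
    · rw [Matrix.one_apply_ne (ne_of_lt hij)]
      by_cases hex : ∃ k : Fin r, (p k).1 = i ∧ (p k).2 = j
      · obtain ⟨k, hk1, hk2⟩ := hex
        by_cases hb : bad k
        · have hFbv := hFb1 k hb
          rw [hk1, hk2] at hFbv
          have hB1 := hbadB1 k hb
          rw [hk1, hk2] at hB1
          have hb' : s i * s j = 1 := by
            have hb2 : s (p k).1 * s (p k).2 = 1 := hb
            rw [hk1, hk2] at hb2
            exact hb2
          rw [hFbv, hB1, mul_one, hb']
          norm_num
        · have hFbz : Fb i j = 0 := by
            refine hFb0 i j fun k' hk' hcon => ?_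
            have hk'k : k' = k := hpinj k' k (hcon.1.trans hk1.symm) (hcon.2.trans hk2.symm)
            rw [hk'k] at hk'
            exact hb hk'
          have hsij : s i * s j = -1 := by
            rcases hsor i j with h | h
            · exfalso
              apply hb
              show s (p k).1 * s (p k).2 = 1
              rw [hk1, hk2]
              exact h
            · exact h
          rw [hFbz]
          have hrr : s i * B i j * s j = s i * s j * B i j := by ring
          rw [hrr, hsij]
          ring
      · have hFbz : Fb i j = 0 := hFb0 i j (fun k _ hcon => hex ⟨k, hcon⟩)
        by_cases hB0 : B i j = 0
        · rw [hB0, hFbz]; ring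
        · have h1B : 1 ≤ B i j := by have := h3 i j hij; omega
          have hB'1 : 1 ≤ B' i j := by
            rw [hB']
            simp only [Matrix.sub_apply]
            have hSS : (∑ k : Fin r, Matrix.single (p k).1 (p k).2 (1:ℤ)) i j = 0 := by
              rw [Matrix.sum_apply]
              exact Finset.sum_eq_zero fun k _ => if_neg (fun hcon => hex ⟨k, hcon⟩)
            rw [hSS]; omega
          have hsij := hsne i j (hc i j hij hB'1)
          rw [hFbz]
          have hrr : s i * B i j * s j = s i * s j * B i j := by ring
          rw [hrr, hsij]
          ring
    · rw [Matrix.one_apply_eq, h1 i, hFbdiag i, mul_one, hss i]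
      norm_num
    · rw [Matrix.one_apply_ne (ne_of_gt hij), h2 i j hij,
        hFblow i j (by intro h; exact absurd (h.trans hij) (lt_irrefl _))]
      ring
  -- basic facts about B - 1
  have hNu : ∀ i j : Fin n, (B - 1) i j ≠ 0 → i < j := by
    intro i j h
    by_contra hnot
    apply h
    rw [Matrix.sub_apply]
    rcases eq_or_lt_of_le (le_of_not_gt hnot) with heq | hij
    · subst heq
      rw [Matrix.one_apply_eq, h1 j]
      ring
    · rw [Matrix.one_apply_ne (ne_of_gt hij), h2 i j hij]
      ring
  -- witnesses for bad pairs
  have hwit : ∀ k : Fin r, ∃ l : List (Fin n), bad k →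
      (l ≠ [] ∧ List.Chain (fun u v => 1 ≤ P u v) (p k).1 l
        ∧ mylast (p k).1 l = (p k).2) := by
    intro k
    by_cases hb : bad k
    · have hnu : ¬(1 ≤ B (p k).1 (p k).2 ∧
          ∀ m : ℕ, 2 ≤ m → ((B - 1) ^ m) (p k).1 (p k).2 = 0) := (hprime k).2.2.1
      push_neg at hnu
      obtain ⟨m, hm2, hmne⟩ := hnu (hedge k)
      obtain ⟨l, hlen, hchN, hlast⟩ := exists_chain_of_pow m (p k).1 (p k).2 hmne
      have hstepk : ∀ u v : Fin n, (B - 1) u v ≠ 0 → (p k).1 ≤ u → v ≤ (p k).2 →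
          ¬(u = (p k).1 ∧ v = (p k).2) → 1 ≤ P u v := by
        intro u v hNuv hau hvb hnuv
        have huv : u < v := hNu u v hNuv
        have hBuv : (B - 1) u v = B u v := by
          rw [Matrix.sub_apply, Matrix.one_apply_ne (ne_of_lt huv), sub_zero]
        have h1B : 1 ≤ B u v := by
          rw [hBuv] at hNuv
          have := h3 u v huv
          omega
        have hFbz : Fb u v = 0 := by
          refine hFb0 u v fun k' _ hcon => ?_
          obtain ⟨hc1, hc2⟩ := hcon
          rcases lt_trichotomy k' k with h | h | h
          · have hle := hphi k' k h
            rw [hc2] at hle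
            exact absurd (lt_of_le_of_lt (hle.trans hau) huv) (lt_irrefl v)
          · subst h
            exact hnuv ⟨hc1.symm, hc2.symm⟩
          · have hle := hphi k k' h
            rw [hc1] at hle
            exact absurd (lt_of_le_of_lt (hvb.trans hle) huv) (lt_irrefl v)
        rw [hPapp, hFbz, Matrix.one_apply_ne (ne_of_lt huv)]
        omega
      refine ⟨l, fun _ => ⟨?_, ?_, hlast⟩⟩
      · intro hnil
        rw [hnil] at hlen
        simp at hlen
        omega
      · exact chain_upgrade hNu hstepk l (p k).1 hchN le_rfl hlast
          (fun _ hl1 => by rw [hlen] at hl1; omega)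
    · exact ⟨[], fun h => absurd h hb⟩
  choose W hW using hwit
  -- the list of witnessed bad pairs
  set lst : List (Fin r) := (List.finRange r).filter (fun k => decide (bad k)) with hlst
  have hmem : ∀ k ∈ lst, bad k := by
    intro k hk
    have := (List.mem_filter.mp hk).2
    simpa using this
  set L : List (Fin n × List (Fin n)) := lst.map (fun k => ((p k).1, W k)) with hL
  have hneL : ∀ w ∈ L, w.2 ≠ [] := by
    intro w hw
    obtain ⟨k, hk, rfl⟩ := List.mem_map.mp hw
    exact (hW k (hmem k hk)).1
  have hchL : ∀ w ∈ L, List.Chain (fun x y => 1 ≤ P x y) w.1 w.2 := by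
    intro w hw
    obtain ⟨k, hk, rfl⟩ := List.mem_map.mp hw
    exact (hW k (hmem k hk)).2.1
  have hpwL : List.Pairwise (fun w w' => mylast w.1 w.2 ≤ w'.1) L := by
    rw [hL, List.pairwise_map]
    refine List.Pairwise.imp_of_mem ?_ ((List.pairwise_lt_finRange r).filter _)
    intro k k' hk hk' hlt'
    show mylast (p k).1 (W k) ≤ (p k').1
    rw [(hW k (hmem k hk)).2.2]
    exact hphi k k' hlt'
  have hnodup : lst.Nodup := (List.nodup_finRange r).filter _
  have hFL : FL L = Fb := by
    rw [hL]
    show ((lst.map (fun k => ((p k).1, W k))).map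
      (fun w => Matrix.single w.1 (mylast w.1 w.2) (1:ℤ))).sum = Fb
    rw [List.map_map]
    have hmapeq : lst.map ((fun w : Fin n × List (Fin n) =>
        Matrix.single w.1 (mylast w.1 w.2) (1:ℤ)) ∘ (fun k => ((p k).1, W k)))
        = lst.map (fun k => Matrix.single (p k).1 (p k).2 (1:ℤ)) := by
      apply List.map_congr_left
      intro k hk
      simp only [Function.comp]
      rw [(hW k (hmem k hk)).2.2]
    rw [hmapeq, hFb, ← List.sum_toFinset _ hnodup]
    congr 1
    ext k
    simp [hlst, List.mem_toFinset, List.mem_filter, List.mem_finRange, Finset.mem_filter]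
  obtain ⟨C, hC1, hC0⟩ := POS ((L.map (fun w => w.2.length)).sum) P L rfl hP0 hPu hneL hchL hpwL
  rw [hFL, hA] at hC1
  -- invertibility of B
  have hdet : B.det = 1 := by
    rw [Matrix.det_of_upperTriangular (fun i j hij => h2 i j hij)]
    simp [h1]
  have hBinv : B * B⁻¹ = 1 := Matrix.mul_nonsing_inv B (by rw [hdet]; exact isUnit_one)
  set D : Matrix (Fin n) (Fin n) ℤ := Matrix.diagonal s with hD
  have hDD : D * D = 1 := by
    rw [hD, Matrix.diagonal_mul_diagonal]
    have hss' : (fun i : Fin n => s i * s i) = (1 : Fin n → ℤ) := funext fun i => hss i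
    rw [hss']
    exact Matrix.diagonal_one
  have h2nd : (D * B * D) * (D * B⁻¹ * D) = 1 := by
    have e1 : (D * B * D) * (D * B⁻¹ * D) = D * B * (D * D) * B⁻¹ * D := by
      noncomm_ring
    rw [e1, hDD, mul_one, mul_assoc D B B⁻¹, hBinv, mul_one]
    exact hDD
  have hCeq : C = D * B⁻¹ * D := Matrix.right_inv_eq_right_inv hC1 h2nd
  refine ⟨s, hsv, ?_⟩
  intro i j
  have h0 : 0 ≤ s i * B⁻¹ i j * s j := by
    have h' := hC0 i j
    rw [hCeq, hD] at h'
    rw [Matrix.mul_diagonal, Matrix.diagonal_mul] at h'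
    exact h'
  rcases hsv i with hi | hi <;> rcases hsv j with hj | hj <;> rw [hi, hj] at h0 ⊢ <;>
    simp only [one_mul, mul_one, neg_one_mul, mul_neg_one, neg_neg] at h0 ⊢ <;>
    first
      | exact (abs_of_nonneg h0).symm
      | exact (abs_of_nonpos (by linarith)).symm
end

section
/- Define the graph Δ_D on {1,…,n} with an edge between i and j (for i < j) exactly when B_{i,j} ≥ 1 and ⟨i,j⟩ = −1 (i.e., Δ_D is obtained from D by removing every edge joining vertices i, j with ⟨i,j⟩ = 1). If B is signable, then Δ_D is bipartite: there is a function c from {1,…,n} to {0,1} with c_i ≠ c_j for every edge {i,j} of Δ_D. -/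
open Matrix

section Aux
variable {n : ℕ}

lemma mypow_nonneg {N : Matrix (Fin n) (Fin n) ℤ} (hpos : ∀ i j, 0 ≤ N i j) :
    ∀ m i j, 0 ≤ (N ^ m) i j := by
  intro m
  induction m with
  | zero => intro i j; by_cases h : i = j <;> simp [Matrix.one_apply, h]
  | succ m ih =>
      intro i j
      rw [pow_succ, Matrix.mul_apply]
      exact Finset.sum_nonneg fun v _ => mul_nonneg (ih i v) (hpos v j)

lemma mypow_support {N : Matrix (Fin n) (Fin n) ℤ}
    (h0 : ∀ i j : Fin n, ¬ i < j → N i j = 0) :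
    ∀ m (i j : Fin n), (N ^ (m + 1)) i j ≠ 0 → i.val + (m + 1) ≤ j.val := by
  intro m
  induction m with
  | zero =>
      intro i j h
      rw [pow_one] at h
      by_contra hc
      exact h (h0 i j (fun hlt => hc (by exact_mod_cast hlt)))
  | succ m ih =>
      intro i j h
      rw [pow_succ, Matrix.mul_apply] at h
      obtain ⟨v, _, hv⟩ := Finset.exists_ne_zero_of_sum_ne_zero h
      have h1 : (N ^ (m + 1)) i v ≠ 0 := fun hz => hv (by rw [hz, zero_mul])
      have h2 : N v j ≠ 0 := fun hz => hv (by rw [hz, mul_zero])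
      have hvj : v < j := by by_contra hc; exact h2 (h0 v j hc)
      have := ih i v h1
      omega

lemma mypow_concat {N : Matrix (Fin n) (Fin n) ℤ} (hpos : ∀ i j, 0 ≤ N i j)
    (a b : ℕ) (i v j : Fin n) :
    (N ^ a) i v * (N ^ b) v j ≤ (N ^ (a + b)) i j := by
  rw [pow_add, Matrix.mul_apply]
  exact Finset.single_le_sum
    (fun w _ => mul_nonneg (mypow_nonneg hpos a i w) (mypow_nonneg hpos b w j))
    (Finset.mem_univ v)

lemma mypow_card_zero {N : Matrix (Fin n) (Fin n) ℤ}
    (h0 : ∀ i j : Fin n, ¬ i < j → N i j = 0) (hn : 1 ≤ n) : N ^ n = 0 := by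
  obtain ⟨m, rfl⟩ : ∃ m, n = m + 1 := ⟨n - 1, by omega⟩
  ext i j
  by_contra h
  have := mypow_support h0 m i j h
  have := j.isLt
  omega

lemma myneg_pow (M : Matrix (Fin n) (Fin n) ℤ) :
    ∀ m, (-M) ^ m = ((-1 : ℤ) ^ m) • M ^ m := by
  intro m
  induction m with
  | zero => simp
  | succ m ih =>
      rw [pow_succ, pow_succ, ih, pow_succ, smul_mul_assoc, mul_neg, smul_neg,
        mul_neg_one, neg_smul]

lemma myinv_eq {B : Matrix (Fin n) (Fin n) ℤ}
    (h0 : ∀ i j : Fin n, ¬ i < j → (B - 1) i j = 0) (hn : 1 ≤ n) :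
    B⁻¹ = ∑ m ∈ Finset.range n, (-(B - 1)) ^ m := by
  apply Matrix.inv_eq_left_inv
  have hg := geom_sum_mul (-(B - 1)) n
  have hx : -(B - 1) - 1 = -B := by rw [neg_sub]; abel
  have hz : (-(B - 1)) ^ n = 0 := by
    rw [myneg_pow, mypow_card_zero h0 hn, smul_zero]
  rw [hx, hz] at hg
  have : (∑ m ∈ Finset.range n, (-(B - 1)) ^ m) * B = 1 := by
    have := congrArg Neg.neg hg
    simpa [mul_neg] using this
  exact this

lemma myinv_apply {B : Matrix (Fin n) (Fin n) ℤ}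
    (h0 : ∀ i j : Fin n, ¬ i < j → (B - 1) i j = 0) (hn : 1 ≤ n) (i j : Fin n) :
    B⁻¹ i j = ∑ m ∈ Finset.range n, (-1 : ℤ) ^ m * ((B - 1) ^ m) i j := by
  rw [myinv_eq h0 hn]
  rw [Matrix.sum_apply]
  refine Finset.sum_congr rfl fun m _ => ?_
  rw [myneg_pow, Matrix.smul_apply, smul_eq_mul]

lemma key {B : Matrix (Fin n) (Fin n) ℤ}
    (hpos : ∀ i j, 0 ≤ (B - 1) i j)
    (h0 : ∀ i j : Fin n, ¬ i < j → (B - 1) i j = 0) (hn : 1 ≤ n)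
    (s : Fin n → ℤ) (hs : ∀ i, s i = 1 ∨ s i = -1)
    (hinv : ∀ i j, s i * B⁻¹ i j * s j = |B⁻¹ i j|) :
    ∀ ℓ : ℕ, 1 ≤ ℓ → ∀ i j : Fin n, ((B - 1) ^ ℓ) i j ≠ 0 →
      (∀ m : ℕ, ((B - 1) ^ m) i j ≠ 0 → m ≤ ℓ) → s i * s j = (-1 : ℤ) ^ ℓ := by
  intro ℓ
  induction ℓ using Nat.strong_induction_on with
  | _ ℓ IH =>
  intro hℓ i j hne hmax
  have hij : i.val + ℓ ≤ j.val := by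
    obtain ⟨m, rfl⟩ : ∃ m, ℓ = m + 1 := ⟨ℓ - 1, by omega⟩
    exact mypow_support h0 m i j hne
  rcases Nat.lt_or_ge ℓ 2 with h2 | h2
  · -- base case ℓ = 1
    have hℓ1 : ℓ = 1 := by omega
    subst hℓ1
    have hinej : i ≠ j := by
      intro h; subst h; omega
    have hBij : (B - 1) i j ≠ 0 := by rwa [pow_one] at hne
    have hBpos : 0 < (B - 1) i j := lt_of_le_of_ne (hpos i j) (Ne.symm hBij)
    have hval : B⁻¹ i j = -((B - 1) i j) := by
      rw [myinv_apply h0 hn i j]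
      have h1mem : 1 ∈ Finset.range n := by
        have := j.isLt; exact Finset.mem_range.mpr (by omega)
      rw [Finset.sum_eq_single_of_mem 1 h1mem]
      · rw [pow_one, pow_one]; ring
      · intro m _ hm1
        rcases Nat.eq_zero_or_pos m with rfl | hm
        · simp [Matrix.one_apply_ne hinej]
        · have : ((B - 1) ^ m) i j = 0 := by
            by_contra hc
            exact hm1 (le_antisymm (hmax m hc) hm)
          rw [this, mul_zero]
    have habs : |B⁻¹ i j| = (B - 1) i j := by
      rw [hval, abs_neg, abs_of_pos hBpos]
    have heq := hinv i j
    rw [hval, abs_neg, abs_of_pos hBpos] at heq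
    have h' : s i * s j * ((B - 1) i j) = (-1) * ((B - 1) i j) := by
      linear_combination -heq
    have := mul_right_cancel₀ hBij h'
    rw [this, pow_one]
  · -- inductive step
    obtain ⟨k, rfl⟩ : ∃ k, ℓ = k + 1 := ⟨ℓ - 1, by omega⟩
    have hk1 : 1 ≤ k := by omega
    rw [pow_succ', Matrix.mul_apply] at hne
    obtain ⟨v, _, hv⟩ := Finset.exists_ne_zero_of_sum_ne_zero hne
    have hiv : (B - 1) i v ≠ 0 := fun hz => hv (by rw [hz, zero_mul])
    have hvj : ((B - 1) ^ k) v j ≠ 0 := fun hz => hv (by rw [hz, mul_zero])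
    have hivpos : 0 < (B - 1) i v := lt_of_le_of_ne (hpos i v) (Ne.symm hiv)
    have hvjpos : 0 < ((B - 1) ^ k) v j := lt_of_le_of_ne (mypow_nonneg hpos k v j) (Ne.symm hvj)
    -- s i * s v = -1
    have hA : s i * s v = (-1 : ℤ) ^ 1 := by
      refine IH 1 (by omega) le_rfl i v (by rwa [pow_one]) ?_
      intro m hm
      by_contra hc
      push_neg at hc
      have hmpos : 0 < ((B - 1) ^ m) i v :=
        lt_of_le_of_ne (mypow_nonneg hpos m i v) (Ne.symm hm)
      have hcon : 0 < ((B - 1) ^ (m + k)) i j :=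
        lt_of_lt_of_le (mul_pos hmpos hvjpos) (mypow_concat hpos m k i v j)
      have := hmax (m + k) (ne_of_gt hcon)
      omega
    -- s v * s j = (-1)^k
    have hB : s v * s j = (-1 : ℤ) ^ k := by
      refine IH k (by omega) hk1 v j hvj ?_
      intro q hq
      have hqpos : 0 < ((B - 1) ^ q) v j :=
        lt_of_le_of_ne (mypow_nonneg hpos q v j) (Ne.symm hq)
      have hivpow : 0 < ((B - 1 : Matrix (Fin n) (Fin n) ℤ) ^ 1) i v := by
        rw [pow_one]; exact hivpos
      have hcon : 0 < ((B - 1) ^ (1 + q)) i j :=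
        lt_of_lt_of_le (mul_pos hivpow hqpos) (mypow_concat hpos 1 q i v j)
      have := hmax (1 + q) (ne_of_gt hcon)
      omega
    have hvv : s v * s v = 1 := by rcases hs v with h | h <;> rw [h] <;> ring
    have hcomb : s i * s j * (s v * s v) = (-1 : ℤ) ^ 1 * (-1 : ℤ) ^ k := by
      rw [← hA, ← hB]; ring
    rw [hvv, mul_one] at hcomb
    rw [hcomb, pow_one, pow_succ]; ring


end Aux

/-- Let `Δ_D` be the graph on the vertices with an edge between
`i < j` exactly when `B i j ≥ 1` and `⟨i,j⟩ = -1`.  If `B` is signable, then `Δ_D`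
is bipartite. -/
theorem stmt16 {n : ℕ} (hn : 1 ≤ n) (B : Matrix (Fin n) (Fin n) ℤ)
    (h1 : ∀ i, B i i = 1) (h2 : ∀ i j : Fin n, j < i → B i j = 0)
    (h3 : ∀ i j : Fin n, i < j → 0 ≤ B i j)
    (hsig : IsSignable B⁻¹) :
    ∃ c : Fin n → Bool, ∀ i j : Fin n,
      i < j → 1 ≤ B i j → pairing B i j = -1 → c i ≠ c j := by
  obtain ⟨s, hs, hinv⟩ := hsig
  have hpos : ∀ i j, 0 ≤ (B - 1) i j := by
    intro i j
    rcases lt_trichotomy i j with h | h | h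
    · have := h3 i j h
      rw [Matrix.sub_apply, Matrix.one_apply_ne (ne_of_lt h)]
      omega
    · subst h
      simp [Matrix.sub_apply, h1 i]
    · rw [Matrix.sub_apply, Matrix.one_apply_ne (ne_of_lt h).symm, h2 i j h]
      norm_num
  have h0 : ∀ i j : Fin n, ¬ i < j → (B - 1) i j = 0 := by
    intro i j h
    rcases eq_or_lt_of_le (le_of_not_gt h) with heq | hlt
    · subst heq
      simp [Matrix.sub_apply, h1]
    · rw [Matrix.sub_apply, Matrix.one_apply_ne (ne_of_lt hlt).symm, h2 i j hlt]
      norm_num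
  refine ⟨fun i => decide (s i = 1), ?_⟩
  intro i j hij hB hpair
  have hne : i ≠ j := ne_of_lt hij
  have hB1 : (B - 1) i j = B i j := by
    rw [Matrix.sub_apply, Matrix.one_apply_ne hne, sub_zero]
  have h1mem : (1 : ℕ) ∈ {m : ℕ | 1 ≤ m ∧ ((B - 1) ^ m) i j ≠ 0} := by
    refine ⟨le_rfl, ?_⟩
    rw [pow_one, hB1]
    omega
  have hbdd : BddAbove {m : ℕ | 1 ≤ m ∧ ((B - 1) ^ m) i j ≠ 0} := by
    refine ⟨n, fun m hm => ?_⟩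
    obtain ⟨hm1, hm2⟩ := hm
    obtain ⟨m', rfl⟩ : ∃ m', m = m' + 1 := ⟨m - 1, by omega⟩
    have := mypow_support h0 m' i j hm2
    have := j.isLt
    omega
  have hLmem := Nat.sSup_mem ⟨1, h1mem⟩ hbdd
  have hmax : ∀ m : ℕ, ((B - 1) ^ m) i j ≠ 0 →
      m ≤ sSup {m : ℕ | 1 ≤ m ∧ ((B - 1) ^ m) i j ≠ 0} := by
    intro m hm
    rcases Nat.eq_zero_or_pos m with rfl | h
    · exact absurd (by simp [Matrix.one_apply_ne hne]) hm
    · exact le_csSup hbdd ⟨h, hm⟩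
  have hkey := key hpos h0 hn s hs hinv _ hLmem.1 i j hLmem.2 hmax
  have hpairval : pairing B i j =
      (-1 : ℤ) ^ sSup {m : ℕ | 1 ≤ m ∧ ((B - 1) ^ m) i j ≠ 0} := by
    unfold pairing
    rw [if_neg hne, if_pos ⟨1, h1mem⟩]
  rw [hpairval] at hpair
  rw [hpair] at hkey
  intro hcc
  simp only [decide_eq_decide] at hcc
  have hsij : s i = s j := by
    rcases hs i with hi | hi <;> rcases hs j with hj | hj <;> rw [hi, hj] <;>
      first
        | rfl
        | (exfalso; rw [hi, hj] at hcc; norm_num at hcc)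
  rw [hsij] at hkey
  rcases hs j with hj | hj <;> rw [hj] at hkey <;> norm_num at hkey
end

section
/- Assume S is valid. For each d ∈ {1,…,n−1} let S_d = {s ∈ S : ((B−I)^m)_{d,s} ≠ 0 for some m ≥ 0}, and partition S_d into S_d⁺ = {s ∈ S_d : ⟨s,n⟩ = +1} and S_d⁻ = {s ∈ S_d : ⟨s,n⟩ = −1}, where ⟨·,·⟩ is computed from B. Then B is signable if and only if for every d ∈ {1,…,n−1} with |S_d| ≥ 2 one has ∑_{s∈S_d⁻} |(B⁻¹)_{d,s}| ≥ ∑_{s∈S_d⁺} |(B⁻¹)_{d,s}|. -/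
open Matrix

/-- The matrix of the digraph `D_S` obtained from the digraph `D₀` (with adjacency
matrix `B₀ - I`) by adjoining a new last vertex `n` and one edge `s → n` for each
`s ∈ S`. -/
def extendMat {k : ℕ} (B₀ : Matrix (Fin k) (Fin k) ℤ) (S : Finset (Fin k)) :
    Matrix (Fin (k + 1)) (Fin (k + 1)) ℤ :=
  Matrix.of fun i j =>
    if hi : (i : ℕ) < k then
      if hj : (j : ℕ) < k then B₀ ⟨i, hi⟩ ⟨j, hj⟩
      else if (⟨i, hi⟩ : Fin k) ∈ S then 1 else 0
    else if (j : ℕ) < k then 0 else 1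

section Aux
variable {k : ℕ} (M : Matrix (Fin k) (Fin k) ℤ)

lemma powNonneg (h1 : ∀ i j, 0 ≤ M i j) : ∀ (m : ℕ) (i j : Fin k), 0 ≤ (M ^ m) i j := by
  intro m
  induction m with
  | zero => intro i j; by_cases h : i = j <;> simp [h, Matrix.one_apply]
  | succ m ih =>
      intro i j
      rw [pow_succ, Matrix.mul_apply]
      exact Finset.sum_nonneg fun v _ => mul_nonneg (ih i v) (h1 v j)

lemma powSupport (h0 : ∀ i j : Fin k, ¬ ((i:ℕ) < (j:ℕ)) → M i j = 0) :
    ∀ (m : ℕ) (i j : Fin k), (M ^ m) i j ≠ 0 → (i:ℕ) + m ≤ (j:ℕ) := by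
  intro m
  induction m with
  | zero =>
      intro i j h
      rw [pow_zero] at h
      rcases eq_or_ne i j with rfl | hne
      · omega
      · simp [Matrix.one_apply, hne] at h
  | succ m ih =>
      intro i j h
      rw [pow_succ, Matrix.mul_apply] at h
      obtain ⟨v, _, hv⟩ := Finset.exists_ne_zero_of_sum_ne_zero h
      have h1 : (M ^ m) i v ≠ 0 := fun hh => hv (by simp [hh])
      have h2 : M v j ≠ 0 := fun hh => hv (by simp [hh])
      have := ih i v h1
      have hvj : (v:ℕ) < (j:ℕ) := by by_contra hc; exact h2 (h0 v j hc)
      omega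

lemma powConcat (h1 : ∀ i j, 0 ≤ M i j) {a b : ℕ} {i v j : Fin k}
    (ha : (M ^ a) i v ≠ 0) (hb : (M ^ b) v j ≠ 0) : (M ^ (a + b)) i j ≠ 0 := by
  have hpos : 0 < (M ^ (a+b)) i j := by
    rw [pow_add, Matrix.mul_apply]
    apply Finset.sum_pos' (fun w _ => mul_nonneg (powNonneg M h1 a i w) (powNonneg M h1 b w j))
    exact ⟨v, Finset.mem_univ v,
      mul_pos ((powNonneg M h1 a i v).lt_of_ne (Ne.symm ha)) ((powNonneg M h1 b v j).lt_of_ne (Ne.symm hb))⟩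
  exact hpos.ne'

lemma powSplit {a b : ℕ} {i j : Fin k} (h : (M ^ (a + b)) i j ≠ 0) :
    ∃ v, (M ^ a) i v ≠ 0 ∧ (M ^ b) v j ≠ 0 := by
  rw [pow_add, Matrix.mul_apply] at h
  obtain ⟨v, _, hv⟩ := Finset.exists_ne_zero_of_sum_ne_zero h
  exact ⟨v, fun hh => hv (by simp [hh]), fun hh => hv (by simp [hh])⟩

lemma reachBdd (h0 : ∀ i j : Fin k, ¬ ((i:ℕ) < (j:ℕ)) → M i j = 0) (i j : Fin k) :
    BddAbove {m : ℕ | 1 ≤ m ∧ (M ^ m) i j ≠ 0} := by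
  refine ⟨k, fun m hm => ?_⟩
  have := powSupport M h0 m i j hm.2
  have := j.2
  omega
lemma mainLemma (h0 : ∀ i j : Fin k, ¬ ((i:ℕ) < (j:ℕ)) → M i j = 0)
    (h1 : ∀ i j, 0 ≤ M i j) (f : Fin k → ℤ) (hf : ∀ v, f v = 1 ∨ f v = -1)
    (hedge : ∀ v w : Fin k, M v w ≠ 0 → (∀ m : ℕ, 2 ≤ m → (M ^ m) v w = 0) →
      f v * f w = -1) :
    ∀ (L : ℕ) (i j : Fin k), (∃ m : ℕ, 1 ≤ m ∧ (M ^ m) i j ≠ 0) →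
      sSup {m : ℕ | 1 ≤ m ∧ (M ^ m) i j ≠ 0} = L → f i * f j = (-1) ^ L := by
  intro L
  induction L using Nat.strong_induction_on with
  | _ L IH =>
    intro i j hex hL
    have hmem : L ∈ {m : ℕ | 1 ≤ m ∧ (M ^ m) i j ≠ 0} := by
      rw [← hL]
      exact Nat.sSup_mem ⟨hex.choose, hex.choose_spec⟩ (reachBdd M h0 i j)
    obtain ⟨hL1, hLnz⟩ := hmem
    have hub : ∀ m : ℕ, 1 ≤ m → (M ^ m) i j ≠ 0 → m ≤ L := by
      intro m hm hnz
      rw [← hL]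
      exact le_csSup (reachBdd M h0 i j) ⟨hm, hnz⟩
    rcases eq_or_lt_of_le hL1 with hL1' | hL2
    · -- L = 1 : Gamma edge
      have hM : M i j ≠ 0 := by rwa [← hL1', pow_one] at hLnz
      have : ∀ m : ℕ, 2 ≤ m → (M ^ m) i j = 0 := by
        intro m hm
        by_contra hc
        have := hub m (by omega) hc
        omega
      rw [← hL1', pow_one]
      exact hedge i j hM this
    · -- L ≥ 2
      have hsplit : (M ^ (1 + (L - 1))) i j ≠ 0 := by
        have : 1 + (L - 1) = L := by omega
        rwa [this]
      obtain ⟨v, hiv, hvj⟩ := powSplit M hsplit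
      rw [pow_one] at hiv
      -- (i, v) is a Gamma edge
      have hedgeiv : f i * f v = -1 := by
        apply hedge i v hiv
        intro m hm
        by_contra hc
        have hconc : (M ^ (m + (L - 1))) i j ≠ 0 := powConcat M h1 hc hvj
        have := hub (m + (L - 1)) (by omega) hconc
        omega
      -- sSup for (v, j) is L - 1
      have hexvj : ∃ m : ℕ, 1 ≤ m ∧ (M ^ m) v j ≠ 0 := ⟨L - 1, by omega, hvj⟩
      have hsupvj : sSup {m : ℕ | 1 ≤ m ∧ (M ^ m) v j ≠ 0} = L - 1 := by
        apply le_antisymm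
        · apply csSup_le ⟨L - 1, by exact ⟨by omega, hvj⟩⟩
          intro m hm
          have hconc : (M ^ (1 + m)) i j ≠ 0 := powConcat M h1 (by rwa [pow_one]) hm.2
          have := hub (1 + m) (by omega) hconc
          omega
        · exact le_csSup (reachBdd M h0 v j) ⟨by omega, hvj⟩
      have hIH : f v * f j = (-1) ^ (L - 1) := IH (L - 1) (by omega) v j hexvj hsupvj
      have hfv : f v * f v = 1 := by rcases hf v with h | h <;> rw [h] <;> ring
      have : f i * f j = (f i * f v) * (f v * f j) := by
        have h2 : (f i * f v) * (f v * f j) = f i * (f v * f v) * f j := by ring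
        rw [h2, hfv, mul_one]
      rw [this, hedgeiv, hIH]
      have : (-1 : ℤ) ^ L = (-1) * (-1) ^ (L - 1) := by
        have hLL : L = 1 + (L - 1) := by omega
        rw [hLL, pow_add, pow_one]
        ring_nf
        rw [← hLL]
      rw [this]
/-- Alternating sum of powers: the inverse of a unipotent upper-triangular matrix. -/
def altSum {k : ℕ} (B : Matrix (Fin k) (Fin k) ℤ) : Matrix (Fin k) (Fin k) ℤ :=
  ∑ m ∈ Finset.range k, (-(B - 1)) ^ m

lemma powEqZero (h0 : ∀ i j : Fin k, ¬ ((i:ℕ) < (j:ℕ)) → M i j = 0) : M ^ k = 0 := by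
  ext i j
  simp only [Matrix.zero_apply]
  by_contra h
  have := powSupport M h0 k i j h
  have := j.2
  omega

lemma altSum_mul {k : ℕ} (B : Matrix (Fin k) (Fin k) ℤ)
    (h0 : ∀ i j : Fin k, ¬ ((i:ℕ) < (j:ℕ)) → (B - 1) i j = 0) :
    altSum B * B = 1 := by
  have hz : (-(B - 1)) ^ k = 0 := by
    rw [neg_pow, powEqZero (B - 1) h0, mul_zero]
  have h := geom_sum_mul (-(B - 1)) k
  rw [hz] at h
  have h2 : (-(B - 1) - 1) = -B := by abel
  rw [h2] at h
  have h3 : altSum B * (-B) = -(altSum B * B) := by rw [mul_neg]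
  rw [altSum] at h3 ⊢
  rw [h3] at h
  have := neg_eq_iff_eq_neg.mp h
  rw [this]; abel
  
lemma mul_altSum {k : ℕ} (B : Matrix (Fin k) (Fin k) ℤ)
    (h0 : ∀ i j : Fin k, ¬ ((i:ℕ) < (j:ℕ)) → (B - 1) i j = 0) :
    B * altSum B = 1 := by
  have hz : (-(B - 1)) ^ k = 0 := by
    rw [neg_pow, powEqZero (B - 1) h0, mul_zero]
  have h := mul_geom_sum (-(B - 1)) k
  rw [hz] at h
  have h2 : (-(B - 1) - 1) = -B := by abel
  rw [h2] at h
  have h3 : (-B) * altSum B = -(B * altSum B) := by rw [neg_mul]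
  rw [altSum] at h3 ⊢
  rw [h3] at h
  have := neg_eq_iff_eq_neg.mp h
  rw [this]; abel

lemma inv_eq_altSum {k : ℕ} (B : Matrix (Fin k) (Fin k) ℤ)
    (h0 : ∀ i j : Fin k, ¬ ((i:ℕ) < (j:ℕ)) → (B - 1) i j = 0) :
    B⁻¹ = altSum B :=
  Matrix.inv_eq_right_inv (mul_altSum B h0)

lemma altSum_apply {k : ℕ} (B : Matrix (Fin k) (Fin k) ℤ) (i j : Fin k) :
    altSum B i j = ∑ m ∈ Finset.range k, (-1 : ℤ) ^ m * ((B - 1) ^ m) i j := by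
  rw [altSum, Matrix.sum_apply]
  congr 1
  ext m
  rw [neg_pow]
  rcases Nat.even_or_odd m with he | ho
  · rw [he.neg_one_pow, one_mul, he.neg_one_pow, one_mul]
  · rw [ho.neg_one_pow, ho.neg_one_pow, neg_one_mul, neg_one_mul, Matrix.neg_apply]
section Entries
variable {k : ℕ} (B : Matrix (Fin k) (Fin k) ℤ)
  (h0 : ∀ i j : Fin k, ¬ ((i:ℕ) < (j:ℕ)) → (B - 1) i j = 0)
include h0

lemma altSum_diag (i : Fin k) : altSum B i i = 1 := by
  rw [altSum_apply]
  have hk : 0 < k := i.pos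
  rw [Finset.sum_eq_single 0]
  · simp [Matrix.one_apply]
  · intro m hm hm0
    have : ((B - 1) ^ m) i i = 0 := by
      by_contra h
      have := powSupport (B - 1) h0 m i i h
      omega
    rw [this, mul_zero]
  · intro h
    exact absurd (Finset.mem_range.mpr hk) h

lemma altSum_eq_zero {i j : Fin k} (hij : ¬ ((i:ℕ) < (j:ℕ))) (hne : i ≠ j) :
    altSum B i j = 0 := by
  rw [altSum_apply]
  apply Finset.sum_eq_zero
  intro m _
  have : ((B - 1) ^ m) i j = 0 := by
    by_contra h
    have := powSupport (B - 1) h0 m i j h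
    have : (i : ℕ) = (j : ℕ) ∨ (i:ℕ) < (j:ℕ) := by omega
    rcases this with h' | h'
    · exact hne (Fin.ext h')
    · exact hij h'
  rw [this, mul_zero]

lemma altSum_ne_reach {i j : Fin k} (hne : i ≠ j) (h : altSum B i j ≠ 0) :
    ∃ m : ℕ, 1 ≤ m ∧ ((B - 1) ^ m) i j ≠ 0 := by
  by_contra hc
  push_neg at hc
  apply h
  rw [altSum_apply]
  apply Finset.sum_eq_zero
  intro m _
  rcases Nat.eq_zero_or_pos m with rfl | hm
  · simp [Matrix.one_apply, hne]
  · rw [hc m hm, mul_zero]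

lemma altSum_unit {i j : Fin k} (hij : (i:ℕ) < (j:ℕ))
    (hu : ∀ m : ℕ, 2 ≤ m → ((B - 1) ^ m) i j = 0) :
    altSum B i j = -(B i j) := by
  have hk : 1 < k := lt_of_le_of_lt (by omega : 1 ≤ (j:ℕ)) j.2
  have hne : i ≠ j := fun h => by rw [h] at hij; omega
  rw [altSum_apply]
  rw [Finset.sum_eq_single 1]
  · rw [pow_one, pow_one, Matrix.sub_apply, Matrix.one_apply_ne hne]
    ring
  · intro m hm hm1
    rcases Nat.eq_zero_or_pos m with rfl | hmp
    · simp [Matrix.one_apply, hne]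
    · rw [hu m (by omega), mul_zero]
  · intro h
    exact absurd (Finset.mem_range.mpr hk) h

end Entries
section Ext
variable {n : ℕ} (B₀ : Matrix (Fin n) (Fin n) ℤ) (S : Finset (Fin n))

lemma ext_block (i j : Fin n) : extendMat B₀ S i.castSucc j.castSucc = B₀ i j := by
  simp [extendMat, i.is_lt, j.is_lt]

lemma ext_col (d : Fin n) :
    extendMat B₀ S d.castSucc (Fin.last n) = if d ∈ S then 1 else 0 := by
  simp [extendMat, d.is_lt]

lemma ext_row (j : Fin n) : extendMat B₀ S (Fin.last n) j.castSucc = 0 := by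
  simp [extendMat]

lemma ext_corner : extendMat B₀ S (Fin.last n) (Fin.last n) = 1 := by
  simp [extendMat]
end Ext
section Ext2
variable {n : ℕ} (B₀ : Matrix (Fin n) (Fin n) ℤ) (S : Finset (Fin n))
  (h1 : ∀ i, B₀ i i = 1) (h2 : ∀ i j : Fin n, j < i → B₀ i j = 0)
  (h3 : ∀ i j : Fin n, i < j → 0 ≤ B₀ i j)

include h1 h2 in
lemma tri_base : ∀ i j : Fin n, ¬ ((i:ℕ) < (j:ℕ)) → (B₀ - 1) i j = 0 := by
  intro i j h
  rcases eq_or_ne i j with rfl | hne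
  · simp [h1 i]
  · have : (j : ℕ) < (i : ℕ) := by
      rcases Nat.lt_trichotomy (i:ℕ) (j:ℕ) with h' | h' | h'
      · exact absurd h' h
      · exact absurd (Fin.ext h') hne
      · exact h'
    rw [Matrix.sub_apply, Matrix.one_apply_ne hne, h2 i j this]
    ring

include h1 h2 h3 in
lemma nonneg_base : ∀ i j : Fin n, 0 ≤ (B₀ - 1) i j := by
  intro i j
  rcases Nat.lt_trichotomy (i:ℕ) (j:ℕ) with h' | h' | h'
  · have hne : i ≠ j := fun h => by rw [h] at h'; omega
    rw [Matrix.sub_apply, Matrix.one_apply_ne hne, sub_zero]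
    exact h3 i j h'
  · have : i = j := Fin.ext h'
    subst this
    simp [h1 i]
  · rw [tri_base B₀ h1 h2 i j (by omega)]

include h1 h2 in
lemma tri_ext : ∀ i j : Fin (n+1), ¬ ((i:ℕ) < (j:ℕ)) → (extendMat B₀ S - 1) i j = 0 := by
  intro i j h
  rcases eq_or_ne i j with rfl | hne
  · rcases Fin.eq_castSucc_or_eq_last i with ⟨i0, rfl⟩ | rfl
    · simp [ext_block, h1 i0]
    · simp [ext_corner]
  · have hji : (j : ℕ) < (i : ℕ) := by
      rcases Nat.lt_trichotomy (i:ℕ) (j:ℕ) with h' | h' | h'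
      · exact absurd h' h
      · exact absurd (Fin.ext h') hne
      · exact h'
    rw [Matrix.sub_apply, Matrix.one_apply_ne hne]
    rcases Fin.eq_castSucc_or_eq_last i with ⟨i0, rfl⟩ | rfl
    · rcases Fin.eq_castSucc_or_eq_last j with ⟨j0, rfl⟩ | rfl
      · rw [ext_block, h2 i0 j0 (by exact_mod_cast hji)]; ring
      · simp [Fin.val_last] at hji; omega
    · rcases Fin.eq_castSucc_or_eq_last j with ⟨j0, rfl⟩ | rfl
      · rw [_root_.ext_row]; ring
      · exact absurd rfl hne

include h1 h2 h3 in
lemma nonneg_ext : ∀ i j : Fin (n+1), 0 ≤ (extendMat B₀ S - 1) i j := by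
  intro i j
  rcases Nat.lt_trichotomy (i:ℕ) (j:ℕ) with h' | h' | h'
  · have hne : i ≠ j := fun h => by rw [h] at h'; omega
    rw [Matrix.sub_apply, Matrix.one_apply_ne hne, sub_zero]
    rcases Fin.eq_castSucc_or_eq_last i with ⟨i0, rfl⟩ | rfl
    · rcases Fin.eq_castSucc_or_eq_last j with ⟨j0, rfl⟩ | rfl
      · rw [ext_block]
        exact h3 i0 j0 (by simpa using h')
      · rw [_root_.ext_col]; split <;> omega
    · rcases Fin.eq_castSucc_or_eq_last j with ⟨j0, rfl⟩ | rfl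
      · have := j0.is_lt; simp [Fin.val_last] at h'; omega
      · omega
  · have : i = j := Fin.ext h'
    subst this
    rw [tri_ext B₀ S h1 h2 i i (by omega)]
  · rw [tri_ext B₀ S h1 h2 i j (by omega)]

lemma block_pow : ∀ (m : ℕ) (i j : Fin n),
    ((extendMat B₀ S - 1) ^ m) i.castSucc j.castSucc = ((B₀ - 1) ^ m) i j := by
  intro m
  induction m with
  | zero =>
      intro i j
      simp [Matrix.one_apply, Fin.castSucc_inj]
  | succ m ih =>
      intro i j
      rw [pow_succ, pow_succ, Matrix.mul_apply, Matrix.mul_apply, Fin.sum_univ_castSucc]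
      have hlast : (extendMat B₀ S - 1) (Fin.last n) j.castSucc = 0 := by
        rw [Matrix.sub_apply, Matrix.one_apply_ne, _root_.ext_row]
        · ring
        · exact (Fin.castSucc_lt_last j).ne'
      rw [hlast, mul_zero, add_zero]
      apply Finset.sum_congr rfl
      intro v _
      rw [ih i v]
      congr 1
      rw [Matrix.sub_apply, Matrix.sub_apply, ext_block]
      congr 1
      simp [Matrix.one_apply, Fin.castSucc_inj]

include h1 h2 in
lemma block_altSum (i j : Fin n) :
    altSum (extendMat B₀ S) i.castSucc j.castSucc = altSum B₀ i j := by
  rw [altSum_apply, altSum_apply, Finset.sum_range_succ]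
  have hz : ((B₀ - 1) ^ n) = 0 := powEqZero (B₀ - 1) (tri_base B₀ h1 h2)
  rw [block_pow, hz]
  simp only [Matrix.zero_apply, mul_zero, add_zero]
  apply Finset.sum_congr rfl
  intro m _
  rw [block_pow]
end Ext2
lemma sign_entry {a b X : ℤ} (ha : a = 1 ∨ a = -1) (hb : b = 1 ∨ b = -1)
    (h : a * X * b = |X|) : X = a * b * |X| := by
  rcases ha with rfl | rfl <;> rcases hb with rfl | rfl <;>
    simp only [one_mul, mul_one, neg_mul, mul_neg, neg_neg] at h ⊢ <;> omega

lemma sign_neg_one {a b X : ℤ} (ha : a = 1 ∨ a = -1) (hb : b = 1 ∨ b = -1)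
    (h : a * X * b = |X|) (hX : X < 0) : a * b = -1 := by
  rcases ha with rfl | rfl <;> rcases hb with rfl | rfl <;>
    rw [abs_of_neg hX] at h <;> simp only [one_mul, mul_one, neg_mul, mul_neg, neg_neg] at h ⊢ <;> omega
open Classical in
/-- With `B` the matrix of `D_S` and `S` valid (`Γ_(D_S)` bipartite),
`B` is signable iff for every vertex `d` of `D₀` with `|S_d| ≥ 2` one has
`∑_(s ∈ S_d⁻) |(B⁻¹) d s| ≥ ∑_(s ∈ S_d⁺) |(B⁻¹) d s|`, where
`S_d = {s ∈ S : some ((B−I)^m) d s ≠ 0, m ≥ 0}` is partitioned according to the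
sign of `⟨s, n⟩` computed from `B`. -/
theorem stmt17 {n : ℕ} (hn : 1 ≤ n) (B₀ : Matrix (Fin n) (Fin n) ℤ)
    (h1 : ∀ i, B₀ i i = 1) (h2 : ∀ i j : Fin n, j < i → B₀ i j = 0)
    (h3 : ∀ i j : Fin n, i < j → 0 ≤ B₀ i j)
    (hD0 : IsSignable B₀⁻¹)
    (S : Finset (Fin n))
    (B : Matrix (Fin (n + 1)) (Fin (n + 1)) ℤ) (hB : B = extendMat B₀ S)
    (hvalid : GammaBipartite B) :
    IsSignable B⁻¹ ↔
      ∀ d : Fin n,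
        2 ≤ (S.filter fun s => ∃ m : ℕ, ((B - 1) ^ m) d.castSucc s.castSucc ≠ 0).card →
        (∑ s ∈ S.filter (fun s => (∃ m : ℕ, ((B - 1) ^ m) d.castSucc s.castSucc ≠ 0) ∧
              pairing B s.castSucc (Fin.last n) = 1), |B⁻¹ d.castSucc s.castSucc|) ≤
          ∑ s ∈ S.filter (fun s => (∃ m : ℕ, ((B - 1) ^ m) d.castSucc s.castSucc ≠ 0) ∧
              pairing B s.castSucc (Fin.last n) = -1), |B⁻¹ d.castSucc s.castSucc| := by
  have h0B : ∀ i j : Fin (n+1), ¬ ((i:ℕ) < (j:ℕ)) → (B - 1) i j = 0 := by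
    rw [hB]; exact tri_ext B₀ S h1 h2
  have h1B : ∀ i j : Fin (n+1), 0 ≤ (B - 1) i j := by
    rw [hB]; exact nonneg_ext B₀ S h1 h2 h3
  have h0B0 := tri_base B₀ h1 h2
  have h1B0 := nonneg_base B₀ h1 h2 h3
  have hinv : B⁻¹ = altSum B := inv_eq_altSum B h0B
  have hinv0 : B₀⁻¹ = altSum B₀ := inv_eq_altSum B₀ h0B0
  rw [hinv] at *
  rw [hinv0] at hD0
  have hblock : ∀ (m : ℕ) (i j : Fin n),
      ((B - 1) ^ m) i.castSucc j.castSucc = ((B₀ - 1) ^ m) i j := by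
    rw [hB]; exact block_pow B₀ S
  have hbalt : ∀ i j : Fin n, altSum B i.castSucc j.castSucc = altSum B₀ i j := by
    rw [hB]; exact block_altSum B₀ S h1 h2
  have hnecl : ∀ s : Fin n, s.castSucc ≠ Fin.last n := fun s => (Fin.castSucc_lt_last s).ne
  have hAcol : ∀ d : Fin n, (B - 1) d.castSucc (Fin.last n) = if d ∈ S then 1 else 0 := by
    intro d
    rw [Matrix.sub_apply, Matrix.one_apply_ne (hnecl d), hB, _root_.ext_col, sub_zero]
  have hreachS : ∀ s : Fin n, s ∈ S →
      ∃ m : ℕ, 1 ≤ m ∧ ((B - 1) ^ m) s.castSucc (Fin.last n) ≠ 0 := by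
    intro s hs
    refine ⟨1, le_refl 1, ?_⟩
    rw [pow_one, hAcol s, if_pos hs]
    exact one_ne_zero
  have hpairing : ∀ i j : Fin (n+1), i ≠ j →
      (∃ m : ℕ, 1 ≤ m ∧ ((B - 1) ^ m) i j ≠ 0) →
      pairing B i j = (-1 : ℤ) ^ sSup {m : ℕ | 1 ≤ m ∧ ((B - 1) ^ m) i j ≠ 0} := by
    intro i j hne hex
    unfold pairing
    rw [if_neg hne, if_pos hex]
  -- sums rewritten over altSum B
  have colId : ∀ d : Fin n, altSum B d.castSucc (Fin.last n)
      = -∑ s ∈ S, altSum B d.castSucc s.castSucc := by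
    intro d
    have hmul := altSum_mul B h0B
    have hent : (altSum B * B) d.castSucc (Fin.last n) = (1 : Matrix (Fin (n+1)) (Fin (n+1)) ℤ) d.castSucc (Fin.last n) := by
      rw [hmul]
    rw [Matrix.mul_apply, Matrix.one_apply_ne (hnecl d), Fin.sum_univ_castSucc] at hent
    have hBcorner : B (Fin.last n) (Fin.last n) = 1 := by rw [hB]; exact ext_corner B₀ S
    have hBcol : ∀ w : Fin n, B w.castSucc (Fin.last n) = if w ∈ S then 1 else 0 := by
      intro w; rw [hB]; exact _root_.ext_col B₀ S w
    rw [hBcorner, mul_one] at hent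
    have hsum : ∑ w : Fin n, altSum B d.castSucc w.castSucc * B w.castSucc (Fin.last n)
        = ∑ s ∈ S, altSum B d.castSucc s.castSucc := by
      rw [Finset.sum_congr rfl (fun w _ => by rw [hBcol w, mul_ite, mul_one, mul_zero])]
      rw [Finset.sum_ite_mem, Finset.univ_inter]
    rw [hsum] at hent
    linarith
  have hrestrict : ∀ d : Fin n, ∑ s ∈ S, altSum B d.castSucc s.castSucc
      = ∑ s ∈ S.filter (fun s => ∃ m : ℕ, ((B - 1) ^ m) d.castSucc s.castSucc ≠ 0),
          altSum B d.castSucc s.castSucc := by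
    intro d
    refine (Finset.sum_filter_of_ne ?_).symm
    intro x _ hne0
    rcases eq_or_ne d x with rfl | hdx
    · exact ⟨0, by rw [pow_zero, Matrix.one_apply_eq]; exact one_ne_zero⟩
    · obtain ⟨m, _, hm⟩ := altSum_ne_reach B h0B
        (fun h => hdx (Fin.castSucc_inj.mp h)) hne0
      exact ⟨m, hm⟩
  have hpm : ∀ s : Fin n, s ∈ S → pairing B s.castSucc (Fin.last n) = 1 ∨
      pairing B s.castSucc (Fin.last n) = -1 := by
    intro s hs
    rw [hpairing _ _ (hnecl s) (hreachS s hs)]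
    rcases Nat.even_or_odd (sSup {m : ℕ | 1 ≤ m ∧ ((B - 1) ^ m) s.castSucc (Fin.last n) ≠ 0}) with he | ho
    · exact Or.inl he.neg_one_pow
    · exact Or.inr ho.neg_one_pow
  have hKey : ∀ t : Fin (n+1) → ℤ, (∀ v, t v = 1 ∨ t v = -1) →
      (∀ v w : Fin (n+1), (B - 1) v w ≠ 0 → (∀ m : ℕ, 2 ≤ m → ((B - 1) ^ m) v w = 0) →
        t v * t w = -1) →
      (∀ i j : Fin n, altSum B i.castSucc j.castSucc
        = t i.castSucc * t j.castSucc * |altSum B i.castSucc j.castSucc|) →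
      ∀ d : Fin n, t d.castSucc * t (Fin.last n) * altSum B d.castSucc (Fin.last n)
        = (∑ s ∈ S.filter (fun s => (∃ m : ℕ, ((B - 1) ^ m) d.castSucc s.castSucc ≠ 0) ∧
              pairing B s.castSucc (Fin.last n) = -1), |altSum B d.castSucc s.castSucc|)
          - ∑ s ∈ S.filter (fun s => (∃ m : ℕ, ((B - 1) ^ m) d.castSucc s.castSucc ≠ 0) ∧
              pairing B s.castSucc (Fin.last n) = 1), |altSum B d.castSucc s.castSucc| := by
    intro t ht hedge hbs d
    have hsq : ∀ v, t v * t v = 1 := fun v => by rcases ht v with h | h <;> rw [h] <;> ring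
    have hts' : ∀ s : Fin n, s ∈ S →
        t s.castSucc = pairing B s.castSucc (Fin.last n) * t (Fin.last n) := by
      intro s hs
      have hm := mainLemma (B - 1) h0B h1B t ht hedge
        (sSup {m : ℕ | 1 ≤ m ∧ ((B - 1) ^ m) s.castSucc (Fin.last n) ≠ 0})
        s.castSucc (Fin.last n) (hreachS s hs) rfl
      rw [← hpairing _ _ (hnecl s) (hreachS s hs)] at hm
      calc t s.castSucc = t s.castSucc * (t (Fin.last n) * t (Fin.last n)) := by
            rw [hsq, mul_one]
        _ = (t s.castSucc * t (Fin.last n)) * t (Fin.last n) := by ring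
        _ = pairing B s.castSucc (Fin.last n) * t (Fin.last n) := by rw [hm]
    rw [colId d, hrestrict d, mul_neg, Finset.mul_sum]
    have hcongr : ∀ s ∈ S.filter (fun s => ∃ m : ℕ, ((B - 1) ^ m) d.castSucc s.castSucc ≠ 0),
        t d.castSucc * t (Fin.last n) * altSum B d.castSucc s.castSucc
          = pairing B s.castSucc (Fin.last n) * |altSum B d.castSucc s.castSucc| := by
      intro s hs
      have hsS : s ∈ S := (Finset.mem_filter.mp hs).1
      conv_lhs => rw [hbs d s, hts' s hsS]
      have e : t d.castSucc * t (Fin.last n) * (t d.castSucc *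
          (pairing B s.castSucc (Fin.last n) * t (Fin.last n)) *
          |altSum B d.castSucc s.castSucc|)
          = (t d.castSucc * t d.castSucc) * (t (Fin.last n) * t (Fin.last n)) *
            (pairing B s.castSucc (Fin.last n) * |altSum B d.castSucc s.castSucc|) := by ring
      rw [e, hsq, hsq, one_mul, one_mul]
    rw [Finset.sum_congr rfl hcongr]
    have hTsplit : S.filter (fun s => ∃ m : ℕ, ((B - 1) ^ m) d.castSucc s.castSucc ≠ 0)
        = (S.filter (fun s => (∃ m : ℕ, ((B - 1) ^ m) d.castSucc s.castSucc ≠ 0) ∧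
            pairing B s.castSucc (Fin.last n) = 1))
          ∪ (S.filter (fun s => (∃ m : ℕ, ((B - 1) ^ m) d.castSucc s.castSucc ≠ 0) ∧
            pairing B s.castSucc (Fin.last n) = -1)) := by
      ext s
      simp only [Finset.mem_filter, Finset.mem_union]
      constructor
      · rintro ⟨hsS, hP⟩
        rcases hpm s hsS with h | h
        · exact Or.inl ⟨hsS, hP, h⟩
        · exact Or.inr ⟨hsS, hP, h⟩
      · rintro (⟨hsS, hP, _⟩ | ⟨hsS, hP, _⟩) <;> exact ⟨hsS, hP⟩
    have hdisj : Disjoint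
        (S.filter (fun s => (∃ m : ℕ, ((B - 1) ^ m) d.castSucc s.castSucc ≠ 0) ∧
            pairing B s.castSucc (Fin.last n) = 1))
        (S.filter (fun s => (∃ m : ℕ, ((B - 1) ^ m) d.castSucc s.castSucc ≠ 0) ∧
            pairing B s.castSucc (Fin.last n) = -1)) := by
      rw [Finset.disjoint_left]
      intro s hsp hsm
      have e1 := (Finset.mem_filter.mp hsp).2.2
      have e2 := (Finset.mem_filter.mp hsm).2.2
      rw [e1] at e2
      exact absurd e2 (by norm_num)
    rw [hTsplit, Finset.sum_union hdisj]
    have hplus : ∑ s ∈ S.filter (fun s => (∃ m : ℕ, ((B - 1) ^ m) d.castSucc s.castSucc ≠ 0) ∧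
            pairing B s.castSucc (Fin.last n) = 1),
          pairing B s.castSucc (Fin.last n) * |altSum B d.castSucc s.castSucc|
        = ∑ s ∈ S.filter (fun s => (∃ m : ℕ, ((B - 1) ^ m) d.castSucc s.castSucc ≠ 0) ∧
            pairing B s.castSucc (Fin.last n) = 1), |altSum B d.castSucc s.castSucc| := by
      apply Finset.sum_congr rfl
      intro s hs
      rw [(Finset.mem_filter.mp hs).2.2, one_mul]
    have hminus : ∑ s ∈ S.filter (fun s => (∃ m : ℕ, ((B - 1) ^ m) d.castSucc s.castSucc ≠ 0) ∧
            pairing B s.castSucc (Fin.last n) = -1),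
          pairing B s.castSucc (Fin.last n) * |altSum B d.castSucc s.castSucc|
        = -∑ s ∈ S.filter (fun s => (∃ m : ℕ, ((B - 1) ^ m) d.castSucc s.castSucc ≠ 0) ∧
            pairing B s.castSucc (Fin.last n) = -1), |altSum B d.castSucc s.castSucc| := by
      rw [← Finset.sum_neg_distrib]
      apply Finset.sum_congr rfl
      intro s hs
      rw [(Finset.mem_filter.mp hs).2.2]
      ring
    rw [hplus, hminus]
    ring
  have hsing : ∀ d : Fin n,
      (S.filter fun s => ∃ m : ℕ, ((B - 1) ^ m) d.castSucc s.castSucc ≠ 0).card ≤ 1 →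
      (S.filter (fun s => (∃ m : ℕ, ((B - 1) ^ m) d.castSucc s.castSucc ≠ 0) ∧
          pairing B s.castSucc (Fin.last n) = 1)) = ∅ := by
    intro d hcard
    rw [Finset.eq_empty_iff_forall_notMem]
    intro s hs
    obtain ⟨hsS, hP, hp1⟩ := Finset.mem_filter.mp hs
    have hno2 : ∀ m : ℕ, 2 ≤ m → ((B - 1) ^ m) s.castSucc (Fin.last n) = 0 := by
      intro m hm
      by_contra hmne
      have hmeq : m = (m - 1) + 1 := by omega
      rw [hmeq] at hmne
      obtain ⟨v, hv1, hv2⟩ := powSplit (B - 1) hmne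
      rw [pow_one] at hv2
      have hvne : v ≠ Fin.last n := by
        intro h
        rw [h] at hv2
        exact hv2 (h0B (Fin.last n) (Fin.last n) (by omega))
      rcases Fin.eq_castSucc_or_eq_last v with ⟨w, rfl⟩ | rfl
      · have hwS : w ∈ S := by
          by_contra hwn
          rw [hAcol w, if_neg hwn] at hv2
          exact hv2 rfl
        obtain ⟨m₀, hm₀⟩ := id hP
        have hPw : ∃ mm : ℕ, ((B - 1) ^ mm) d.castSucc w.castSucc ≠ 0 :=
          ⟨m₀ + (m - 1), powConcat (B - 1) h1B hm₀ hv1⟩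
        have hwmem : w ∈ S.filter (fun s => ∃ m : ℕ, ((B - 1) ^ m) d.castSucc s.castSucc ≠ 0) :=
          Finset.mem_filter.mpr ⟨hwS, hPw⟩
        have hsmem : s ∈ S.filter (fun s => ∃ m : ℕ, ((B - 1) ^ m) d.castSucc s.castSucc ≠ 0) :=
          Finset.mem_filter.mpr ⟨hsS, hP⟩
        have hsw : s = w := Finset.card_le_one.mp hcard s hsmem w hwmem
        subst hsw
        have := powSupport (B - 1) h0B (m - 1) s.castSucc s.castSucc hv1
        omega
      · exact absurd rfl hvne
    have hsup : sSup {m : ℕ | 1 ≤ m ∧ ((B - 1) ^ m) s.castSucc (Fin.last n) ≠ 0} = 1 := by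
      have hmem1 : (1 : ℕ) ∈ {m : ℕ | 1 ≤ m ∧ ((B - 1) ^ m) s.castSucc (Fin.last n) ≠ 0} := by
        refine ⟨le_refl 1, ?_⟩
        rw [pow_one, hAcol s, if_pos hsS]
        exact one_ne_zero
      apply le_antisymm
      · apply csSup_le ⟨1, hmem1⟩
        intro m hmm
        by_contra hcon
        exact hmm.2 (hno2 m (by omega))
      · exact le_csSup (reachBdd (B - 1) h0B _ _) hmem1
    rw [hpairing _ _ (hnecl s) (hreachS s hsS), hsup, pow_one] at hp1
    exact absurd hp1 (by norm_num)
  constructor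
  · rintro ⟨t, ht, hts⟩ d _
    have hedge : ∀ v w : Fin (n+1), (B - 1) v w ≠ 0 →
        (∀ m : ℕ, 2 ≤ m → ((B - 1) ^ m) v w = 0) → t v * t w = -1 := by
      intro v w hvw hu
      have hlt : (v:ℕ) < (w:ℕ) := by by_contra hcon; exact hvw (h0B v w hcon)
      have hne : v ≠ w := fun h => by rw [h] at hlt; omega
      have hBvw : B v w = (B - 1) v w := by
        rw [Matrix.sub_apply, Matrix.one_apply_ne hne, sub_zero]
      have hneg : altSum B v w < 0 := by
        rw [altSum_unit B h0B hlt hu, hBvw]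
        have := h1B v w
        omega
      exact sign_neg_one (ht v) (ht w) (hts v w) hneg
    have hbs : ∀ i j : Fin n, altSum B i.castSucc j.castSucc
        = t i.castSucc * t j.castSucc * |altSum B i.castSucc j.castSucc| :=
      fun i j => sign_entry (ht _) (ht _) (hts i.castSucc j.castSucc)
    have hk := hKey t ht hedge hbs d
    have habs : t d.castSucc * altSum B d.castSucc (Fin.last n) * t (Fin.last n)
        = |altSum B d.castSucc (Fin.last n)| := hts _ _
    have : t d.castSucc * t (Fin.last n) * altSum B d.castSucc (Fin.last n)
        = |altSum B d.castSucc (Fin.last n)| := by rw [← habs]; ring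
    rw [this] at hk
    have := abs_nonneg (altSum B d.castSucc (Fin.last n))
    linarith
  · intro hIneq
    obtain ⟨c, hc⟩ := hvalid
    obtain ⟨ε, hε, hεs⟩ := hD0
    set t : Fin (n+1) → ℤ := fun v => if c v then 1 else -1 with htdef
    have ht : ∀ v, t v = 1 ∨ t v = -1 := by
      intro v; by_cases h : c v <;> simp [htdef, h]
    have hsq : ∀ v, t v * t v = 1 := by
      intro v; rcases ht v with h | h <;> rw [h] <;> ring
    have hedge : ∀ v w : Fin (n+1), (B - 1) v w ≠ 0 →
        (∀ m : ℕ, 2 ≤ m → ((B - 1) ^ m) v w = 0) → t v * t w = -1 := by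
      intro v w hvw hu
      have hlt : (v:ℕ) < (w:ℕ) := by by_contra hcon; exact hvw (h0B v w hcon)
      have hne : v ≠ w := fun h => by rw [h] at hlt; omega
      have hBvw : B v w = (B - 1) v w := by
        rw [Matrix.sub_apply, Matrix.one_apply_ne hne, sub_zero]
      have hge : 1 ≤ B v w := by
        have := h1B v w
        rw [hBvw]
        omega
      have hcc := hc v w ⟨by rw [Fin.lt_def]; exact hlt, hge, hu⟩
      by_cases h : c v <;> by_cases h' : c w <;>
        simp [htdef, h, h'] at hcc ⊢
    have hedge0 : ∀ v w : Fin n, (B₀ - 1) v w ≠ 0 →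
        (∀ m : ℕ, 2 ≤ m → ((B₀ - 1) ^ m) v w = 0) → ε v * ε w = -1 := by
      intro v w hvw hu
      have hlt : (v:ℕ) < (w:ℕ) := by by_contra hcon; exact hvw (h0B0 v w hcon)
      have hne : v ≠ w := fun h => by rw [h] at hlt; omega
      have hBvw : B₀ v w = (B₀ - 1) v w := by
        rw [Matrix.sub_apply, Matrix.one_apply_ne hne, sub_zero]
      have hneg : altSum B₀ v w < 0 := by
        rw [altSum_unit B₀ h0B0 hlt hu, hBvw]
        have := h1B0 v w
        omega
      exact sign_neg_one (hε v) (hε w) (hεs v w) hneg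
    have hbs : ∀ i j : Fin n, altSum B i.castSucc j.castSucc
        = t i.castSucc * t j.castSucc * |altSum B i.castSucc j.castSucc| := by
      intro i j
      rcases eq_or_ne i j with rfl | hne
      · rw [altSum_diag B h0B, abs_one, mul_one, hsq]
      · by_cases hz : altSum B i.castSucc j.castSucc = 0
        · rw [hz]
          simp
        · have hne' : i.castSucc ≠ j.castSucc := fun h => hne (Fin.castSucc_inj.mp h)
          obtain ⟨m, hm1, hmnz⟩ := altSum_ne_reach B h0B hne' hz
          have hexB : ∃ m : ℕ, 1 ≤ m ∧ ((B - 1) ^ m) i.castSucc j.castSucc ≠ 0 :=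
            ⟨m, hm1, hmnz⟩
          have hexB0 : ∃ m : ℕ, 1 ≤ m ∧ ((B₀ - 1) ^ m) i j ≠ 0 :=
            ⟨m, hm1, by rw [← hblock]; exact hmnz⟩
          have hmain0 := mainLemma (B₀ - 1) h0B0 h1B0 ε hε hedge0
            (sSup {m : ℕ | 1 ≤ m ∧ ((B₀ - 1) ^ m) i j ≠ 0}) i j hexB0 rfl
          have hmaint := mainLemma (B - 1) h0B h1B t ht hedge
            (sSup {m : ℕ | 1 ≤ m ∧ ((B - 1) ^ m) i.castSucc j.castSucc ≠ 0})
            i.castSucc j.castSucc hexB rfl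
          have hsets : {m : ℕ | 1 ≤ m ∧ ((B - 1) ^ m) i.castSucc j.castSucc ≠ 0}
              = {m : ℕ | 1 ≤ m ∧ ((B₀ - 1) ^ m) i j ≠ 0} := by
            ext mm
            simp only [Set.mem_setOf_eq, hblock]
          have hεe : ε i * ε j = t i.castSucc * t j.castSucc := by
            rw [hmain0, hmaint, hsets]
          have hεsign := sign_entry (hε i) (hε j) (hεs i j)
          rw [hbalt i j]
          conv_lhs => rw [hεsign]
          rw [hεe]
    have hSig : ∀ d : Fin n,
        0 ≤ (∑ s ∈ S.filter (fun s => (∃ m : ℕ, ((B - 1) ^ m) d.castSucc s.castSucc ≠ 0) ∧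
              pairing B s.castSucc (Fin.last n) = -1), |altSum B d.castSucc s.castSucc|)
          - ∑ s ∈ S.filter (fun s => (∃ m : ℕ, ((B - 1) ^ m) d.castSucc s.castSucc ≠ 0) ∧
              pairing B s.castSucc (Fin.last n) = 1), |altSum B d.castSucc s.castSucc| := by
      intro d
      rcases le_or_gt 2 (S.filter fun s => ∃ m : ℕ, ((B - 1) ^ m) d.castSucc s.castSucc ≠ 0).card with h | h
      · have := hIneq d h
        linarith
      · rw [hsing d (by omega)]
        simp only [Finset.sum_empty, sub_zero]
        exact Finset.sum_nonneg fun s _ => abs_nonneg _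
    refine ⟨t, ht, ?_⟩
    intro i j
    rcases Fin.eq_castSucc_or_eq_last i with ⟨i0, rfl⟩ | rfl
    · rcases Fin.eq_castSucc_or_eq_last j with ⟨j0, rfl⟩ | rfl
      · conv_lhs => rw [hbs i0 j0]
        have e : t i0.castSucc * (t i0.castSucc * t j0.castSucc *
            |altSum B i0.castSucc j0.castSucc|) * t j0.castSucc
            = (t i0.castSucc * t i0.castSucc) * (t j0.castSucc * t j0.castSucc) *
              |altSum B i0.castSucc j0.castSucc| := by ring
        rw [e, hsq, hsq, one_mul, one_mul]
      · have hk := hKey t ht hedge hbs i0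
        have hge := hSig i0
        have e1 : t i0.castSucc * altSum B i0.castSucc (Fin.last n) * t (Fin.last n)
            = t i0.castSucc * t (Fin.last n) * altSum B i0.castSucc (Fin.last n) := by ring
        rw [e1, hk]
        rw [← hk]
        have e2 : |altSum B i0.castSucc (Fin.last n)|
            = |t i0.castSucc * t (Fin.last n) * altSum B i0.castSucc (Fin.last n)| := by
          rcases ht i0.castSucc with h | h <;> rcases ht (Fin.last n) with h' | h' <;>
            rw [h, h'] <;> simp
        rw [e2, hk, abs_of_nonneg hge, ← hk]
    · rcases Fin.eq_castSucc_or_eq_last j with ⟨j0, rfl⟩ | rfl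
      · have hz : altSum B (Fin.last n) j0.castSucc = 0 := by
          apply altSum_eq_zero B h0B
          · have := j0.is_lt
            simp only [Fin.val_last, Fin.coe_castSucc]
            omega
          · exact (hnecl j0).symm
        rw [hz]
        simp
      · rw [altSum_diag B h0B, mul_one, hsq, abs_one]
end Aux
end
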